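/- arXiv:2508.08449 — 5 statements merged into one kernel-verified Lean document; each statement's English description precedes it below -/
import Mathlib

section
/- Let K be a compact subset of ℂ, n ∈ ℕ, and w : K → [0,∞) a bounded function that is nonzero at at least n+1 points of K. Then there exists a monic polynomial T of degree n with complex coefficients such that sup_{z∈K} w(z)|T(z)| ≤ sup_{z∈K} w(z)|P(z)| for every monic polynomial P of degree n; moreover the minimal value sup_{z∈K} w(z)|T(z)| is strictly positive. -/
open Polynomial Metric Set

/-- The weighted sup norm `‖P‖_{E,v} = sup_{z ∈ E} v(z) |P(z)|`. -/
noncomputable def wnorm (E : Set ℂ) (v : ℂ → ℝ) (P : Polynomial ℂ) : ℝ :=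
  sSup ((fun z => v z * ‖P.eval z‖) '' E)

noncomputable def tp (n : ℕ) (c : Fin n → ℂ) : Polynomial ℂ :=
  X ^ n + ∑ i : Fin n, C (c i) * X ^ (i : ℕ)

lemma tp_deg_sum_lt (n : ℕ) (c : Fin n → ℂ) :
    (∑ i : Fin n, C (c i) * X ^ (i : ℕ) : Polynomial ℂ).degree < (n : WithBot ℕ) := by
  refine lt_of_le_of_lt (degree_sum_le _ _) ?_
  rw [Finset.sup_lt_iff (by exact WithBot.bot_lt_coe n)]
  intro i _
  exact lt_of_le_of_lt (degree_C_mul_X_pow_le _ _) (by exact_mod_cast i.isLt)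

lemma tp_monic (n : ℕ) (c : Fin n → ℂ) : (tp n c).Monic :=
  monic_X_pow_add (tp_deg_sum_lt n c)

lemma tp_natDegree (n : ℕ) (c : Fin n → ℂ) : (tp n c).natDegree = n := by
  have : (tp n c).degree = n := by
    rw [tp, degree_add_eq_left_of_degree_lt (by rw [degree_X_pow]; exact tp_deg_sum_lt n c),
      degree_X_pow]
  exact natDegree_eq_of_degree_eq_some this

lemma tp_coeff_lt (n : ℕ) (c : Fin n → ℂ) (i : Fin n) : (tp n c).coeff i = c i := by
  rw [tp, coeff_add, coeff_X_pow, if_neg (Nat.ne_of_lt i.isLt), zero_add, finset_sum_coeff]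
  simp only [coeff_C_mul, coeff_X_pow]
  rw [Finset.sum_eq_single i]
  · simp
  · intro j _ hj
    have : (i : ℕ) ≠ (j : ℕ) := fun h => hj (Fin.ext h.symm)
    simp [this]
  · simp

lemma tp_eval (n : ℕ) (c : Fin n → ℂ) (z : ℂ) :
    (tp n c).eval z = z ^ n + ∑ i : Fin n, c i * z ^ (i : ℕ) := by
  simp [tp, eval_finset_sum]

lemma monic_rep (n : ℕ) (P : Polynomial ℂ) (hm : P.Monic) (hd : P.natDegree = n) :
    P = tp n (fun i => P.coeff i) := by
  have h1 : P = ∑ i ∈ Finset.range (n + 1), C (P.coeff i) * X ^ i := by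
    have := P.as_sum_range' (n + 1) (by omega)
    simpa [C_mul_X_pow_eq_monomial] using this
  have hc : P.coeff n = 1 := by rw [← hd]; exact hm.coeff_natDegree
  have h2 : tp n (fun i => P.coeff i) = ∑ i ∈ Finset.range (n + 1), C (P.coeff i) * X ^ i := by
    rw [tp, Finset.sum_range_succ, hc, map_one, one_mul, add_comm]
    congr 1
    exact Fin.sum_univ_eq_sum_range (fun i => C (P.coeff i) * X ^ i) n
  rw [h2]; exact h1

theorem stmt2 (K : Set ℂ) (hK : IsCompact K) (n : ℕ) (w : ℂ → ℝ)
    (hw0 : ∀ z ∈ K, 0 ≤ w z) (hwb : BddAbove (w '' K))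
    (hsupp : ∃ S : Finset ℂ, ↑S ⊆ K ∧ n + 1 ≤ S.card ∧ ∀ z ∈ S, w z ≠ 0) :
    ∃ T : Polynomial ℂ, T.Monic ∧ T.natDegree = n ∧
      (∀ P : Polynomial ℂ, P.Monic → P.natDegree = n → wnorm K w T ≤ wnorm K w P) ∧
      0 < wnorm K w T := by
  classical
  obtain ⟨S₀, hS₀K, hS₀card, hS₀w⟩ := hsupp
  obtain ⟨S, hSS₀, hScard⟩ := Finset.exists_subset_card_eq hS₀card
  have hSK : (S : Set ℂ) ⊆ K := fun z hz => hS₀K (hSS₀ hz)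
  have hSw : ∀ z ∈ S, 0 < w z := fun z hz =>
    lt_of_le_of_ne (hw0 z (hSK hz)) (Ne.symm (hS₀w z (hSS₀ hz)))
  have hSne : S.Nonempty := Finset.card_pos.mp (by omega)
  obtain ⟨z₀, hz₀S⟩ := id hSne
  have hz₀K : z₀ ∈ K := hSK hz₀S
  have Kne : K.Nonempty := ⟨z₀, hz₀K⟩
  -- bound on w
  obtain ⟨W, hW⟩ := hwb
  have hWle : ∀ z ∈ K, w z ≤ W := fun z hz => hW ⟨z, hz, rfl⟩
  have hW0 : 0 ≤ W := le_trans (hw0 _ hz₀K) (hWle _ hz₀K)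
  -- bound on K
  obtain ⟨r, hr⟩ := hK.isBounded.subset_closedBall 0
  set R := max r 1 with hRdef
  have hR1 : (1 : ℝ) ≤ R := le_max_right _ _
  have hRz : ∀ z ∈ K, ‖z‖ ≤ R := by
    intro z hz
    have := hr hz
    rw [mem_closedBall, dist_zero_right] at this
    exact this.trans (le_max_left _ _)
  -- bddAbove of the image sets
  have hbdd : ∀ P : Polynomial ℂ,
      BddAbove ((fun z => w z * ‖P.eval z‖) '' K) := by
    intro P
    obtain ⟨M, hM⟩ := hK.exists_bound_of_continuousOn (P.continuous_aeval).continuousOn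
    refine ⟨W * max M 0, ?_⟩
    rintro x ⟨z, hz, rfl⟩
    have h1 : ‖P.eval z‖ ≤ max M 0 := by
      have := hM z hz
      exact this.trans (le_max_left _ _)
    exact mul_le_mul (hWle z hz) h1 (norm_nonneg _) hW0
  have hle : ∀ (P : Polynomial ℂ), ∀ z ∈ K,
      w z * ‖P.eval z‖ ≤ wnorm K w P :=
    fun P z hz => le_csSup (hbdd P) ⟨z, hz, rfl⟩
  have hwn_nonneg : ∀ P : Polynomial ℂ, 0 ≤ wnorm K w P := fun P =>
    le_trans (mul_nonneg (hw0 _ hz₀K) (norm_nonneg _)) (hle P z₀ hz₀K)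
  have hwn_le : ∀ (P : Polynomial ℂ) (M : ℝ),
      (∀ z ∈ K, w z * ‖P.eval z‖ ≤ M) → wnorm K w P ≤ M := by
    intro P M h
    refine csSup_le (Kne.image _) ?_
    rintro x ⟨z, hz, rfl⟩
    exact h z hz
  -- the function on coefficient space
  set f : (Fin n → ℂ) → ℝ := fun c => wnorm K w (tp n c) with hfdef
  set L := W * (n * R ^ n) with hLdef
  have hL0 : 0 ≤ L := mul_nonneg hW0 (mul_nonneg (Nat.cast_nonneg n) (pow_nonneg (show (0:ℝ) ≤ R by linarith) n))
  have key : ∀ c c' : Fin n → ℂ, f c ≤ f c' + L * ‖c - c'‖ := by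
    intro c c'
    refine hwn_le _ _ ?_
    intro z hz
    have h1 : ‖(tp n c).eval z - (tp n c').eval z‖ ≤ (n * R ^ n) * ‖c - c'‖ := by
      rw [tp_eval, tp_eval, add_sub_add_left_eq_sub, ← Finset.sum_sub_distrib]
      have h2 : ∀ i : Fin n, ‖c i * z ^ (i : ℕ) - c' i * z ^ (i : ℕ)‖ ≤
          ‖c - c'‖ * R ^ n := by
        intro i
        rw [← sub_mul, norm_mul, norm_pow]
        have ha : ‖c i - c' i‖ ≤ ‖c - c'‖ := norm_le_pi_norm (c - c') i
        have hb : ‖z‖ ^ (i : ℕ) ≤ R ^ n :=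
          le_trans (pow_le_pow_left₀ (norm_nonneg _) (hRz z hz) _)
            (pow_le_pow_right₀ hR1 (le_of_lt i.isLt))
        exact mul_le_mul ha hb (pow_nonneg (norm_nonneg _) _) (norm_nonneg _)
      calc ‖∑ i : Fin n, (c i * z ^ (i:ℕ) - c' i * z ^ (i:ℕ))‖
          ≤ ∑ i : Fin n, ‖c i * z ^ (i:ℕ) - c' i * z ^ (i:ℕ)‖ :=
            norm_sum_le _ _
        _ ≤ ∑ _i : Fin n, ‖c - c'‖ * R ^ n := Finset.sum_le_sum (fun i _ => h2 i)
        _ = n * (‖c - c'‖ * R ^ n) := by simp [Finset.sum_const, mul_comm]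
        _ = (n * R ^ n) * ‖c - c'‖ := by ring
    have h3 : ‖(tp n c).eval z‖ ≤
        ‖(tp n c').eval z‖ + ‖(tp n c).eval z - (tp n c').eval z‖ := by
      calc ‖(tp n c).eval z‖
          = ‖(tp n c').eval z + ((tp n c).eval z - (tp n c').eval z)‖ := by ring_nf
        _ ≤ _ := norm_add_le _ _
    have h4 : ‖(tp n c).eval z‖ ≤
        ‖(tp n c').eval z‖ + (n * R ^ n) * ‖c - c'‖ := by linarith
    calc w z * ‖(tp n c).eval z‖
        ≤ w z * (‖(tp n c').eval z‖ + (n * R ^ n) * ‖c - c'‖) :=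
          mul_le_mul_of_nonneg_left h4 (hw0 z hz)
      _ = w z * ‖(tp n c').eval z‖ + w z * ((n * R ^ n) * ‖c - c'‖) := by ring
      _ ≤ wnorm K w (tp n c') + L * ‖c - c'‖ := by
          refine add_le_add (hle _ z hz) ?_
          have hLe : L * ‖c - c'‖ = W * ((n * R ^ n) * ‖c - c'‖) := by rw [hLdef]; ring
          rw [hLe]
          have hnn : (0:ℝ) ≤ (n * R ^ n) * ‖c - c'‖ :=
            mul_nonneg (mul_nonneg (Nat.cast_nonneg n)
              (pow_nonneg (show (0:ℝ) ≤ R by linarith) n)) (norm_nonneg (c - c'))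
          exact mul_le_mul_of_nonneg_right (hWle z hz) hnn
  have hlip : LipschitzWith (Real.toNNReal L) f := by
    refine LipschitzWith.of_dist_le_mul ?_
    intro c c'
    rw [Real.dist_eq, Real.coe_toNNReal L hL0, dist_eq_norm, abs_sub_le_iff]
    constructor
    · have := key c c'; linarith
    · have := key c' c
      rw [← norm_neg, neg_sub] at this
      linarith
  -- coercivity
  set cmin := S.inf' hSne w with hcmindef
  have hcmin : 0 < cmin := (Finset.lt_inf'_iff hSne).mpr hSw
  set D := (∑ i ∈ S, ∑ k ∈ Finset.range (n + 1),
      ‖(Lagrange.basis S id i).coeff k‖) + 1 with hDdef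
  have hD1 : (1 : ℝ) ≤ D := by
    have : (0:ℝ) ≤ ∑ i ∈ S, ∑ k ∈ Finset.range (n + 1),
        ‖(Lagrange.basis S id i).coeff k‖ :=
      Finset.sum_nonneg fun i _ => Finset.sum_nonneg fun k _ => norm_nonneg _
    linarith
  have hD0 : (0:ℝ) < D := by linarith
  have hcoer : ∀ c : Fin n → ℂ, ‖c‖ ≤ (f c / cmin) * D := by
    intro c
    have hfc0 : 0 ≤ f c := hwn_nonneg _
    refine (pi_norm_le_iff_of_nonneg
      (mul_nonneg (div_nonneg hfc0 hcmin.le) (by linarith))).mpr ?_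
    intro i
    rw [← tp_coeff_lt n c i]
    set P := tp n c with hPdef
    have hPeq : P = Lagrange.interpolate S id fun x => P.eval (id x) := by
      refine Lagrange.eq_interpolate (Set.injOn_id _) ?_
      rw [hScard]
      refine lt_of_le_of_lt (degree_le_natDegree) ?_
      rw [tp_natDegree]
      exact_mod_cast Nat.lt_succ_self n
    have hcoeff : P.coeff i = ∑ j ∈ S, P.eval j * (Lagrange.basis S id j).coeff i := by
      conv_lhs => rw [hPeq]
      rw [Lagrange.interpolate_apply, finset_sum_coeff]
      simp [coeff_C_mul]
    rw [hcoeff]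
    have heval : ∀ j ∈ S, ‖P.eval j‖ ≤ f c / cmin := by
      intro j hj
      rw [le_div_iff₀ hcmin]
      calc ‖P.eval j‖ * cmin = cmin * ‖P.eval j‖ := mul_comm _ _
        _ ≤ w j * ‖P.eval j‖ :=
            mul_le_mul_of_nonneg_right (Finset.inf'_le w hj) (norm_nonneg _)
        _ ≤ f c := hle _ j (hSK hj)
    calc ‖∑ j ∈ S, P.eval j * (Lagrange.basis S id j).coeff i‖
        ≤ ∑ j ∈ S, ‖P.eval j‖ * ‖(Lagrange.basis S id j).coeff i‖ := by
          refine le_trans (norm_sum_le _ _) ?_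
          refine le_of_eq (Finset.sum_congr rfl fun j _ => ?_)
          rw [norm_mul]
      _ ≤ ∑ j ∈ S, (f c / cmin) * ‖(Lagrange.basis S id j).coeff i‖ := by
          refine Finset.sum_le_sum fun j hj => ?_
          exact mul_le_mul_of_nonneg_right (heval j hj) (norm_nonneg _)
      _ = (f c / cmin) * ∑ j ∈ S, ‖(Lagrange.basis S id j).coeff i‖ := by
          rw [Finset.mul_sum]
      _ ≤ (f c / cmin) * D := by
          refine mul_le_mul_of_nonneg_left ?_ (div_nonneg hfc0 hcmin.le)
          rw [hDdef]
          have hsum : ∑ j ∈ S, ‖(Lagrange.basis S id j).coeff i‖ ≤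
              ∑ j ∈ S, ∑ k ∈ Finset.range (n + 1),
                ‖(Lagrange.basis S id j).coeff k‖ := by
            refine Finset.sum_le_sum fun j _ => ?_
            refine Finset.single_le_sum (f := fun k =>
              ‖(Lagrange.basis S id j).coeff k‖)
              (fun k _ => norm_nonneg _) ?_
            exact Finset.mem_range.mpr (Nat.lt_succ_of_lt i.isLt)
          linarith
  -- minimization
  set ρ := (f 0 + 1) * D / cmin with hρdef
  have hf00 : 0 ≤ f 0 := hwn_nonneg _
  have hρ0 : 0 ≤ ρ := div_nonneg (mul_nonneg (by linarith) hD0.le) hcmin.le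
  obtain ⟨c₀, hc₀B, hminB⟩ := (isCompact_closedBall (0 : Fin n → ℂ) ρ).exists_isMinOn
    ⟨0, mem_closedBall_self hρ0⟩ hlip.continuous.continuousOn
  have hglobal : ∀ c : Fin n → ℂ, f c₀ ≤ f c := by
    intro c
    by_cases hc : c ∈ closedBall (0 : Fin n → ℂ) ρ
    · exact hminB hc
    · have h1 : ρ < ‖c‖ := by
        rw [mem_closedBall, dist_zero_right, not_le] at hc
        exact hc
      have h2 : f 0 < f c := by
        have h3 : (f 0 + 1) * D / cmin < (f c / cmin) * D := lt_of_lt_of_le h1 (hcoer c)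
        rw [div_mul_eq_mul_div, div_lt_div_iff_of_pos_right hcmin] at h3
        have h4 : f 0 + 1 < f c := by
          have := lt_of_mul_lt_mul_right h3 hD0.le
          linarith
        linarith
      exact le_trans (hminB (mem_closedBall_self hρ0)) h2.le
  refine ⟨tp n c₀, tp_monic _ _, tp_natDegree _ _, ?_, ?_⟩
  · intro P hm hd
    have h := hglobal (fun i => P.coeff i)
    conv_rhs => rw [monic_rep n P hm hd]
    exact h
  · have hT0 : tp n c₀ ≠ 0 := (tp_monic n c₀).ne_zero
    have hex : ∃ z ∈ S, (tp n c₀).eval z ≠ 0 := by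
      by_contra h
      push_neg at h
      have hsub : S.val ≤ (tp n c₀).roots := by
        refine (Multiset.le_iff_subset S.nodup).mpr ?_
        intro z hz
        exact (mem_roots hT0).mpr (h z hz)
      have h5 : S.card ≤ (tp n c₀).roots.card := Multiset.card_le_card hsub
      have h6 : (tp n c₀).roots.card ≤ n := by
        have := (tp n c₀).card_roots'
        rwa [tp_natDegree] at this
      omega
    obtain ⟨z, hzS, hze⟩ := hex
    exact lt_of_lt_of_le (mul_pos (hSw z hzS) (norm_pos_iff.mpr hze)) (hle _ z (hSK hzS))
end

section
/- (Weighted Kolmogorov criterion) Let K be a compact subset of ℂ, n ∈ ℕ, w : K → [0,∞) a bounded upper semicontinuous function nonzero at at least n+1 points of K, and P_n a monic polynomial of degree n. Let K₀ be the set of w-extremal points of P_n on K. Then P_n minimizes ‖·‖_{K,w} among monic polynomials of degree n if and only if for every polynomial q of degree at most n−1 one has max_{z₀∈K₀} Re[ P_n(z₀) · conj(q(z₀)) ] ≥ 0. -/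
open Polynomial Metric Set Filter Topology

/-- product of a nonneg USC function and a nonneg continuous function is USC. -/
lemma my_usc_mul {K : Set ℂ} {w : ℂ → ℝ} (husc : UpperSemicontinuousOn w K)
    (hw0 : ∀ z ∈ K, 0 ≤ w z) {g : ℂ → ℝ} (hg : Continuous g) (hg0 : ∀ z, 0 ≤ g z) :
    UpperSemicontinuousOn (fun z => w z * g z) K := by
  intro x hx y hy
  simp only at hy ⊢
  set a := w x with ha
  set b := g x with hb
  have ha0 : 0 ≤ a := hw0 x hx
  have hb0 : 0 ≤ b := hg0 x
  set ε : ℝ := min 1 ((y - a*b)/(a+b+2)) with hε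
  have hab : a * b < y := hy
  have hεpos : 0 < ε := by
    apply lt_min one_pos
    apply div_pos (by linarith) (by linarith)
  have hkey : (a+ε)*(b+ε) < y := by
    have h1 : ε ≤ 1 := min_le_left _ _
    have h2 : ε ≤ (y - a*b)/(a+b+2) := min_le_right _ _
    have h3 : ε * (a+b+2) ≤ y - a*b := by
      rw [← le_div_iff₀ (by linarith)]
      exact h2
    nlinarith
  have hev1 : ∀ᶠ z in 𝓝[K] x, w z < a + ε := husc x hx (a+ε) (by linarith)
  have hev2 : ∀ᶠ z in 𝓝[K] x, g z < b + ε := by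
    apply eventually_nhdsWithin_of_eventually_nhds
    have : ContinuousAt g x := hg.continuousAt
    exact this.eventually_lt continuousAt_const (by linarith)
  have hev3 : ∀ᶠ z in 𝓝[K] x, z ∈ K := eventually_mem_nhdsWithin
  filter_upwards [hev1, hev2, hev3] with z h1 h2 h3
  calc w z * g z < (a+ε)*(b+ε) := by
        apply mul_lt_mul'' h1 h2 (hw0 z h3) (hg0 z)
    _ < y := hkey

/-- USC limit bound along a sequence. -/
lemma my_usc_lim {K : Set ℂ} {f : ℂ → ℝ} (hf : UpperSemicontinuousOn f K)
    {u : ℕ → ℂ} (hu : ∀ k, u k ∈ K) {x : ℂ} (hxK : x ∈ K)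
    (hux : Filter.Tendsto u atTop (𝓝 x)) {L : ℝ}
    (hL : Filter.Tendsto (fun k => f (u k)) atTop (𝓝 L)) : L ≤ f x := by
  by_contra h
  push_neg at h
  set y := (f x + L)/2 with hy
  have h1 : f x < y := by simp [hy]; linarith
  have h2 : y < L := by simp [hy]; linarith
  have hev := hf x hxK y h1
  have htend : Filter.Tendsto u atTop (𝓝[K] x) := by
    rw [tendsto_nhdsWithin_iff]
    exact ⟨hux, Filter.Eventually.of_forall hu⟩
  have hev2 : ∀ᶠ k in atTop, f (u k) < y := htend.eventually hev
  have : L ≤ y := le_of_tendsto hL (hev2.mono fun k hk => le_of_lt hk)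
  linarith

/-- USC function on nonempty compact attains the sSup of its image. -/
lemma my_usc_max {K : Set ℂ} (hK : IsCompact K) (hne : K.Nonempty) {f : ℂ → ℝ}
    (hf : UpperSemicontinuousOn f K) (hb : BddAbove (f '' K)) :
    ∃ x ∈ K, f x = sSup (f '' K) := by
  set M := sSup (f '' K) with hM
  have hex : ∀ k : ℕ, ∃ z, z ∈ K ∧ M - 1/(k+1) < f z := by
    intro k
    have h1 : M - 1/(k+1) < M := by
      have : (0:ℝ) < 1/(k+1) := by positivity
      linarith
    obtain ⟨y, hy, hy2⟩ := exists_lt_of_lt_csSup (hne.image f) h1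
    obtain ⟨z, hz, rfl⟩ := hy
    exact ⟨z, hz, hy2⟩
  choose u hu1 hu2 using hex
  have hle : ∀ k, f (u k) ≤ M := fun k => le_csSup hb ⟨u k, hu1 k, rfl⟩
  have htendf : Filter.Tendsto (fun k => f (u k)) atTop (𝓝 M) := by
    apply tendsto_of_tendsto_of_tendsto_of_le_of_le (g := fun k : ℕ => M - 1/(k+1))
      (h := fun _ => M)
    · have : Filter.Tendsto (fun k : ℕ => 1/((k:ℝ)+1)) atTop (𝓝 0) :=
        tendsto_one_div_add_atTop_nhds_zero_nat
      simpa using tendsto_const_nhds.sub this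
    · exact tendsto_const_nhds
    · exact fun k => le_of_lt (hu2 k)
    · exact hle
  obtain ⟨x, hxK, φ, hφ, hxt⟩ := hK.tendsto_subseq hu1
  have hsub : Filter.Tendsto (fun k => f (u (φ k))) atTop (𝓝 M) :=
    htendf.comp hφ.tendsto_atTop
  have := my_usc_lim hf (fun k => hu1 (φ k)) hxK hxt hsub
  exact ⟨x, hxK, le_antisymm (le_csSup hb ⟨x, hxK, rfl⟩) this⟩

/-- The set of maximizers of a USC function on a compact set is compact. -/
lemma my_level_compact {K : Set ℂ} (hK : IsCompact K) {f : ℂ → ℝ}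
    (hf : UpperSemicontinuousOn f K) {M : ℝ} (hub : ∀ z ∈ K, f z ≤ M) :
    IsCompact {z ∈ K | f z = M} := by
  refine hK.of_isClosed_subset ?_ (fun z hz => hz.1)
  apply IsSeqClosed.isClosed
  intro u x hu hux
  have huK : ∀ k, u k ∈ K := fun k => (hu k).1
  have hxK : x ∈ K := hK.isClosed.isSeqClosed huK hux
  have hconst : Filter.Tendsto (fun k => f (u k)) atTop (𝓝 M) := by
    have he : (fun k => f (u k)) = fun _ => M := funext fun k => (hu k).2
    rw [he]; exact tendsto_const_nhds
  exact ⟨hxK, le_antisymm (hub x hxK) (my_usc_lim hf huK hxK hux hconst)⟩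

set_option maxHeartbeats 2000000 in
/-- Weighted Kolmogorov criterion. -/
theorem stmt5 (K : Set ℂ) (hK : IsCompact K) (n : ℕ) (w : ℂ → ℝ)
    (hw0 : ∀ z ∈ K, 0 ≤ w z) (hwb : BddAbove (w '' K))
    (husc : UpperSemicontinuousOn w K)
    (hsupp : ∃ S : Finset ℂ, ↑S ⊆ K ∧ n + 1 ≤ S.card ∧ ∀ z ∈ S, w z ≠ 0)
    (P : Polynomial ℂ) (hmonic : P.Monic) (hdeg : P.natDegree = n) :
    (∀ Q : Polynomial ℂ, Q.Monic → Q.natDegree = n → wnorm K w P ≤ wnorm K w Q) ↔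
      ∀ q : Polynomial ℂ, q.degree < n →
        ∃ z₀ ∈ {z ∈ K | w z * ‖P.eval z‖ = wnorm K w P},
          0 ≤ (P.eval z₀ * (starRingEnd ℂ) (q.eval z₀)).re := by
  obtain ⟨S, hSK, hScard, hSw⟩ := hsupp
  have hSne : S.Nonempty := Finset.card_pos.mp (by omega)
  have hKne : K.Nonempty := ⟨hSne.choose, hSK hSne.choose_spec⟩
  obtain ⟨W₀, hW₀⟩ := hwb
  have hW : ∀ z ∈ K, w z ≤ max W₀ 1 := fun z hz =>
    le_trans (hW₀ ⟨z, hz, rfl⟩) (le_max_left _ _)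
  set W : ℝ := max W₀ 1 with hWdef
  have hW1 : (1:ℝ) ≤ W := le_max_right _ _
  clear_value W
  have hbound : ∀ R : Polynomial ℂ, ∃ B : ℝ, 1 ≤ B ∧ ∀ z ∈ K, ‖R.eval z‖ ≤ B := by
    intro R
    obtain ⟨B₀, hB₀⟩ := hK.exists_bound_of_continuousOn (R.continuous).continuousOn
    exact ⟨max B₀ 1, le_max_right _ _, fun z hz => le_trans (hB₀ z hz) (le_max_left _ _)⟩
  have hbdd : ∀ R : Polynomial ℂ, BddAbove ((fun z => w z * ‖R.eval z‖) '' K) := by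
    intro R
    obtain ⟨B, hB1, hB⟩ := hbound R
    refine ⟨W*B, ?_⟩
    rintro y ⟨z, hz, rfl⟩
    exact mul_le_mul (hW z hz) (hB z hz) (norm_nonneg _)
      (le_trans zero_le_one hW1)
  set f : ℂ → ℝ := fun z => w z * ‖P.eval z‖ with hfdef
  have hfusc : UpperSemicontinuousOn f K :=
    my_usc_mul husc hw0 (continuous_norm.comp P.continuous)
      (fun z => norm_nonneg _)
  set M : ℝ := wnorm K w P with hMdef
  have hfM : ∀ z ∈ K, f z ≤ M := fun z hz => le_csSup (hbdd P) ⟨z, hz, rfl⟩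
  have hMdef2 : M = sSup (f '' K) := rfl
  have hM0 : 0 < M := by
    have hPne : P ≠ 0 := hmonic.ne_zero
    have hz : ∃ z ∈ S, P.eval z ≠ 0 := by
      by_contra h
      push_neg at h
      exact hPne (Polynomial.eq_zero_of_natDegree_lt_card_of_eval_eq_zero' P S h
        (by rw [hdeg]; omega))
    obtain ⟨z, hzS, hz⟩ := hz
    have hzK := hSK hzS
    have h1 : 0 < f z := mul_pos ((hw0 z hzK).lt_of_ne (Ne.symm (hSw z hzS)))
      (norm_pos_iff.mpr hz)
    exact lt_of_lt_of_le h1 (hfM z hzK)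
  clear_value M
  constructor
  · -- forward direction
    intro hmin q hq
    by_contra hcon
    push_neg at hcon
    -- hcon : every extremal point has negative real part
    set K₀ : Set ℂ := {z ∈ K | f z = M} with hK₀def
    obtain ⟨x₀, hx₀K, hx₀⟩ := my_usc_max hK hKne hfusc (hbdd P)
    have hK₀ne : K₀.Nonempty := ⟨x₀, hx₀K, by rw [hMdef2]; exact hx₀⟩
    have hK₀cpt : IsCompact K₀ := my_level_compact hK hfusc hfM
    set g : ℂ → ℝ := fun z => (P.eval z * (starRingEnd ℂ) (q.eval z)).re with hgdef
    have hgc : Continuous g :=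
      Complex.continuous_re.comp ((P.continuous).mul
        (Complex.continuous_conj.comp q.continuous))
    obtain ⟨z₁, hz₁, hz₁max⟩ := hK₀cpt.exists_isMaxOn hK₀ne hgc.continuousOn
    set δ : ℝ := -g z₁ with hδdef
    have hgneg : g z₁ < 0 := hcon z₁ hz₁
    have hδpos : 0 < δ := by rw [hδdef]; linarith
    have hgK₀ : ∀ z ∈ K₀, g z ≤ -δ := by
      intro z hz
      have h2 : g z ≤ g z₁ := hz₁max hz
      rw [hδdef]; linarith
    clear_value δ
    set U : Set ℂ := {z | g z < -δ/2} with hUdef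
    have hUopen : IsOpen U := isOpen_lt hgc continuous_const
    have hK₀U : K₀ ⊆ U := fun z hz => lt_of_le_of_lt (hgK₀ z hz) (by linarith)
    set D : Set ℂ := K \ U with hDdef
    have hDcpt : IsCompact D := hK.diff hUopen
    have hbddD : BddAbove (f '' D) := (hbdd P).mono (image_mono diff_subset)
    set Me : ℝ := sSup (f '' D) with hMedef
    have hMeD : ∀ z ∈ D, f z ≤ Me := fun z hz => le_csSup hbddD ⟨z, hz, rfl⟩
    have hMeM : Me < M := by
      rcases eq_empty_or_nonempty D with hD | hD
      · rw [hMedef, hD, image_empty, Real.sSup_empty]; exact hM0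
      · obtain ⟨x, hxD, hx⟩ := my_usc_max hDcpt hD (hfusc.mono diff_subset) hbddD
        have hxK : x ∈ K := hxD.1
        have hne : f x ≠ M := fun h => hxD.2 (hK₀U ⟨hxK, h⟩)
        rw [hMedef, ← hx]
        exact lt_of_le_of_ne (hfM x hxK) hne
    clear_value Me
    obtain ⟨B, hB1, hB⟩ := hbound P
    obtain ⟨C, hC1, hC⟩ := hbound q
    set t : ℝ := min 1 (min (δ/(2*C^2)) ((M - Me)/(2*W*C))) with htdef
    have htpos : 0 < t := by
      apply lt_min one_pos
      apply lt_min (by positivity)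
      apply div_pos (by linarith) (by positivity)
    have ht1 : t ≤ 1 := min_le_left _ _
    have htC : t * C^2 ≤ δ/2 := by
      have h2 : t ≤ δ/(2*C^2) := le_trans (min_le_right _ _) (min_le_left _ _)
      rw [le_div_iff₀ (by positivity)] at h2
      linarith
    have htW : t * (W*C) ≤ (M - Me)/2 := by
      have h2 : t ≤ (M - Me)/(2*W*C) := le_trans (min_le_right _ _) (min_le_right _ _)
      rw [le_div_iff₀ (by positivity)] at h2
      linarith
    clear_value t
    set Q : Polynomial ℂ := P + ((t:ℂ)) • q with hQdef
    have hPdeg : P.degree = (n : WithBot ℕ) := by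
      rw [Polynomial.degree_eq_natDegree hmonic.ne_zero, hdeg]
    have hlt : (((t:ℝ):ℂ) • q).degree < P.degree := by
      refine lt_of_le_of_lt (Polynomial.degree_smul_le _ _) ?_
      rw [hPdeg]; exact hq
    have hQmonic : Q.Monic := hmonic.add_of_left hlt
    have hQdeg : Q.natDegree = n := by
      have h1 := Polynomial.degree_add_eq_left_of_degree_lt hlt
      have h2 := Polynomial.natDegree_eq_of_degree_eq h1
      rw [hQdef, h2, hdeg]
    clear_value Q
    set r : ℝ := M/(2*(B+C)) with hrdef
    have hrpos : 0 < r := by positivity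
    have hr3 : r * (B + C) = M/2 := by
      rw [hrdef]; field_simp
    clear_value r
    set M' : ℝ := max (max (M/2) ((M+Me)/2)) (Real.sqrt (M^2 - (t*δ/2)*r^2)) with hM'def
    have hM'M : M' < M := by
      apply max_lt (max_lt (by linarith) (by linarith))
      rw [Real.sqrt_lt' hM0]
      have : 0 < (t*δ/2)*r^2 := by positivity
      linarith
    have hkey : ∀ z ∈ K, w z * ‖Q.eval z‖ ≤ M' := by
      intro z hz
      have hwz := hw0 z hz
      have hQz : Q.eval z = P.eval z + (t:ℂ) * q.eval z := by
        simp [hQdef, smul_eq_mul]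
      have habsq : ‖(t:ℂ) * q.eval z‖ = t * ‖q.eval z‖ := by
        rw [norm_mul, Complex.norm_real, Real.norm_eq_abs, abs_of_pos htpos]
      by_cases hzU : z ∈ U
      · by_cases hsmall : w z ≤ r
        · -- small weight
          have h1 : ‖Q.eval z‖ ≤ B + t*C := by
            rw [hQz]
            refine le_trans (norm_add_le _ _) ?_
            rw [habsq]
            exact add_le_add (hB z hz) (mul_le_mul_of_nonneg_left (hC z hz) htpos.le)
          have h2 : w z * ‖Q.eval z‖ ≤ r * (B + C) := by
            apply mul_le_mul hsmall (le_trans h1 ?_) (norm_nonneg _) hrpos.le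
            have h6 : t*C ≤ 1*C := mul_le_mul_of_nonneg_right ht1 (by linarith)
            linarith
          refine le_trans h2 (le_trans (le_of_eq hr3) ?_)
          exact le_trans (le_max_left _ _) (le_max_left _ _)
        · -- big weight
          push_neg at hsmall
          have hgz : g z < -δ/2 := hzU
          have hid : (‖Q.eval z‖)^2 =
              (‖P.eval z‖)^2 + t^2*(‖q.eval z‖)^2 + 2*t*(g z) := by
            rw [hQz]
            simp only [hgdef, Complex.sq_norm, Complex.normSq_apply, Complex.add_re,
              Complex.add_im, Complex.mul_re, Complex.mul_im, Complex.ofReal_re,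
              Complex.ofReal_im, Complex.conj_re, Complex.conj_im]
            ring
          have hqz2 : (‖q.eval z‖)^2 ≤ C^2 :=
            pow_le_pow_left₀ (norm_nonneg _) (hC z hz) 2
          have hfz : w z * ‖P.eval z‖ ≤ M := hfM z hz
          have hsq : (w z * ‖Q.eval z‖)^2 ≤ M^2 - (t*δ/2)*r^2 := by
            have e1 : (w z * ‖Q.eval z‖)^2
                = (w z * ‖P.eval z‖)^2
                  + (w z)^2 * (t^2*(‖q.eval z‖)^2 + 2*t*(g z)) := by
              rw [mul_pow, mul_pow, hid]; ring
            have e2 : t^2*(‖q.eval z‖)^2 + 2*t*(g z) ≤ -(t*δ/2) := by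
              have h4 : t^2*(‖q.eval z‖)^2 ≤ t*(δ/2) := by
                calc t^2*(‖q.eval z‖)^2 ≤ t^2 * C^2 :=
                      mul_le_mul_of_nonneg_left hqz2 (sq_nonneg t)
                  _ = t * (t*C^2) := by ring
                  _ ≤ t * (δ/2) := mul_le_mul_of_nonneg_left (by linarith) htpos.le
              have h7 : 2*t*(g z) ≤ 2*t*(-δ/2) :=
                mul_le_mul_of_nonneg_left hgz.le (by linarith)
              linarith
            have e3 : (w z)^2 * (t^2*(‖q.eval z‖)^2 + 2*t*(g z))
                ≤ (w z)^2 * (-(t*δ/2)) := by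
              apply mul_le_mul_of_nonneg_left e2 (sq_nonneg _)
            have e4 : (w z)^2 * (-(t*δ/2)) ≤ r^2 * (-(t*δ/2)) := by
              have h8 : r^2 ≤ (w z)^2 := pow_le_pow_left₀ hrpos.le hsmall.le 2
              have h9 : -(t*δ/2) ≤ 0 := by nlinarith
              exact mul_le_mul_of_nonpos_right h8 h9
            have e5 : (w z * ‖P.eval z‖)^2 ≤ M^2 :=
              pow_le_pow_left₀ (mul_nonneg hwz (norm_nonneg _)) hfz 2
            calc (w z * ‖Q.eval z‖)^2
                = (w z * ‖P.eval z‖)^2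
                  + (w z)^2 * (t^2*(‖q.eval z‖)^2 + 2*t*(g z)) := e1
              _ ≤ M^2 + r^2 * (-(t*δ/2)) := by linarith [le_trans e3 e4]
              _ = M^2 - (t*δ/2)*r^2 := by ring
          have habs0 : 0 ≤ w z * ‖Q.eval z‖ :=
            mul_nonneg hwz (norm_nonneg _)
          have h5 : w z * ‖Q.eval z‖ ≤ Real.sqrt (M^2 - (t*δ/2)*r^2) := by
            rw [show w z * ‖Q.eval z‖
              = Real.sqrt ((w z * ‖Q.eval z‖)^2) from (Real.sqrt_sq habs0).symm]
            exact Real.sqrt_le_sqrt hsq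
          exact le_trans h5 (le_max_right _ _)
      · -- z outside U
        have hzD : z ∈ D := ⟨hz, hzU⟩
        have h1 : ‖Q.eval z‖
            ≤ ‖P.eval z‖ + t * ‖q.eval z‖ := by
          rw [hQz]
          refine le_trans (norm_add_le _ _) ?_
          rw [habsq]
        have h2 : w z * ‖Q.eval z‖
            ≤ f z + t * (w z * ‖q.eval z‖) := by
          calc w z * ‖Q.eval z‖
              ≤ w z * (‖P.eval z‖ + t * ‖q.eval z‖) :=
                mul_le_mul_of_nonneg_left h1 hwz
            _ = f z + t * (w z * ‖q.eval z‖) := by simp [hfdef]; ring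
        have h3 : w z * ‖q.eval z‖ ≤ W * C :=
          mul_le_mul (hW z hz) (hC z hz) (norm_nonneg _)
            (le_trans zero_le_one hW1)
        have h4 : w z * ‖Q.eval z‖ ≤ Me + (M - Me)/2 := by
          have := hMeD z hzD
          have h5 : t * (w z * ‖q.eval z‖) ≤ t * (W*C) :=
            mul_le_mul_of_nonneg_left h3 htpos.le
          linarith
        have h6 : Me + (M - Me)/2 = (M+Me)/2 := by ring
        rw [h6] at h4
        exact le_trans h4 (le_trans (le_max_right (M/2) ((M+Me)/2)) (le_max_left _ _))
    have hQle : wnorm K w Q ≤ M' := by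
      apply csSup_le (hKne.image _)
      rintro y ⟨z, hz, rfl⟩
      exact hkey z hz
    have hmle : M ≤ wnorm K w Q := hmin Q hQmonic hQdeg
    linarith
  · -- backward direction
    intro hyp Q hQmonic hQdeg
    have hQPdeg : (Q - P).degree < (n : WithBot ℕ) := by
      have h1 : Q.degree = P.degree := by
        rw [Polynomial.degree_eq_natDegree hQmonic.ne_zero,
          Polynomial.degree_eq_natDegree hmonic.ne_zero, hQdeg, hdeg]
      have h2 := Polynomial.degree_sub_lt h1 hQmonic.ne_zero
        (by rw [hQmonic.leadingCoeff, hmonic.leadingCoeff])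
      rw [Polynomial.degree_eq_natDegree hQmonic.ne_zero, hQdeg] at h2
      exact h2
    obtain ⟨z₀, hz₀, hre⟩ := hyp (Q - P) hQPdeg
    obtain ⟨hz₀K, hz₀M⟩ := hz₀
    have hp0 : P.eval z₀ ≠ 0 := by
      intro h
      rw [h] at hz₀M
      simp at hz₀M
      rw [← hz₀M] at hM0
      simp at hM0
    rw [Polynomial.eval_sub] at hre
    set p := P.eval z₀ with hpdef
    set Qv := Q.eval z₀ with hQvdef
    have habs : ‖p‖ ≤ ‖Qv‖ := by
      have h1 : (p * (starRingEnd ℂ) (Qv - p)).re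
          = (p * (starRingEnd ℂ) Qv).re - Complex.normSq p := by
        simp only [map_sub, mul_sub, Complex.sub_re, Complex.mul_conj, Complex.ofReal_re]
      have h2 : (p * (starRingEnd ℂ) Qv).re ≤ ‖p‖ * ‖Qv‖ := by
        calc (p * (starRingEnd ℂ) Qv).re ≤ ‖p * (starRingEnd ℂ) Qv‖ :=
              Complex.re_le_norm _
          _ = ‖p‖ * ‖Qv‖ := by rw [norm_mul, Complex.norm_conj]
      have h3 : 0 < ‖p‖ := norm_pos_iff.mpr hp0
      have h4 : Complex.normSq p = (‖p‖)^2 := (Complex.sq_norm p).symm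
      nlinarith [hre, h1]
    calc M = w z₀ * ‖p‖ := hz₀M.symm
      _ ≤ w z₀ * ‖Qv‖ := mul_le_mul_of_nonneg_left habs (hw0 _ hz₀K)
      _ ≤ wnorm K w Q := le_csSup (hbdd Q) ⟨z₀, hz₀K, rfl⟩
end

section
/- Let K be a compact subset of ℂ, n ∈ ℕ, and w : K → [0,∞) a bounded upper semicontinuous function nonzero at at least n+1 points of K. If T is a monic polynomial of degree n minimizing ‖·‖_{K,w} among monic polynomials of degree n, then the set { z ∈ K : w(z)|T(z)| = ‖T‖_{K,w} } of w-extremal points of T contains at least n+1 points. -/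
open Polynomial Metric Set Filter


/-- Product of a nonneg usc function and a nonneg continuous function is usc. -/
lemma usc_mul_cont {K : Set ℂ} {w c : ℂ → ℝ} (husc : UpperSemicontinuousOn w K)
    (hc : ContinuousOn c K) (hw0 : ∀ z ∈ K, 0 ≤ w z) (hc0 : ∀ z ∈ K, 0 ≤ c z) :
    UpperSemicontinuousOn (fun z => w z * c z) K := by
  intro x hx y hy
  simp only at hy
  have hcont : Filter.Tendsto (fun ε : ℝ => (w x + ε) * (c x + ε)) (nhds 0)
      (nhds ((w x + 0) * (c x + 0))) := by
    apply Filter.Tendsto.mul <;> exact (tendsto_const_nhds.add tendsto_id)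
  rw [add_zero, add_zero] at hcont
  obtain ⟨ε, hlt, hεpos⟩ :=
    (((hcont.eventually_lt_const hy).filter_mono nhdsWithin_le_nhds).and
      (self_mem_nhdsWithin (s := Set.Ioi (0:ℝ)))).exists
  have h1 : ∀ᶠ z in nhdsWithin x K, w z < w x + ε := husc x hx _ (by linarith)
  have h2 : ∀ᶠ z in nhdsWithin x K, c z < c x + ε := by
    have := hc x hx
    have : Filter.Tendsto c (nhdsWithin x K) (nhds (c x)) := this
    exact this.eventually_lt_const (by linarith)
  have h3 : ∀ᶠ z in nhdsWithin x K, z ∈ K := eventually_mem_nhdsWithin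
  filter_upwards [h1, h2, h3] with z hz1 hz2 hz3
  calc w z * c z ≤ w z * (c x + ε) := by
        apply mul_le_mul_of_nonneg_left (le_of_lt hz2) (hw0 z hz3)
    _ < (w x + ε) * (c x + ε) := by
        apply mul_lt_mul_of_pos_right hz1
        have := hc0 x hx; linarith
    _ < y := hlt


/-- An usc function bounded above on a nonempty compact set attains its supremum. -/
lemma usc_exists_max {K : Set ℂ} (hK : IsCompact K) (hne : K.Nonempty) {f : ℂ → ℝ}
    (hf : UpperSemicontinuousOn f K) (hb : BddAbove (f '' K)) :
    ∃ x ∈ K, ∀ z ∈ K, f z ≤ f x := by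
  set M := sSup (f '' K) with hM
  have himne : (f '' K).Nonempty := hne.image f
  -- a sequence with values tending to M
  obtain ⟨u, humono, hulim, humem⟩ := (exists_seq_tendsto_sSup himne hb : _)
  choose x hxK hfx using fun k => humem k
  obtain ⟨z, hzK, φ, hφmono, hφlim⟩ := hK.tendsto_subseq hxK
  refine ⟨z, hzK, fun y hy => ?_⟩
  have hle : f y ≤ M := le_csSup hb ⟨y, hy, rfl⟩
  have hMz : M ≤ f z := by
    by_contra hlt
    push_neg at hlt
    obtain ⟨c, hc1, hc2⟩ := exists_between hlt
    have hev : ∀ᶠ w in nhdsWithin z K, f w < c := hf z hzK c hc1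
    have htend : Filter.Tendsto (fun k => x (φ k)) atTop (nhdsWithin z K) := by
      apply tendsto_nhdsWithin_of_tendsto_nhds_of_eventually_within _ hφlim
      exact Filter.Eventually.of_forall fun k => hxK (φ k)
    have hev2 : ∀ᶠ k in atTop, f (x (φ k)) < c := htend.eventually hev
    have hlimsub : Filter.Tendsto (fun k => f (x (φ k))) atTop (nhds M) := by
      have : Filter.Tendsto (fun k => u (φ k)) atTop (nhds M) :=
        hulim.comp hφmono.tendsto_atTop
      simpa [fun k => hfx (φ k)] using this
    have : M ≤ c := le_of_tendsto hlimsub (hev2.mono fun k hk => hk.le)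
    linarith
  exact hle.trans hMz


lemma bdd_poly {K : Set ℂ} (hK : IsCompact K) {w : ℂ → ℝ} (hw0 : ∀ z ∈ K, 0 ≤ w z)
    (hwb : BddAbove (w '' K)) (P : Polynomial ℂ) :
    ∃ C, 0 ≤ C ∧ ∀ z ∈ K, w z * ‖P.eval z‖ ≤ C := by
  obtain ⟨Cw, hCw⟩ := hwb
  obtain ⟨Cp, hCp⟩ := hK.exists_bound_of_continuousOn (P.continuous_aeval).continuousOn
  refine ⟨max Cw 0 * max Cp 0, mul_nonneg (le_max_right _ _) (le_max_right _ _), fun z hz => ?_⟩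
  have h1 : w z ≤ max Cw 0 := le_trans (hCw ⟨z, hz, rfl⟩) (le_max_left _ _)
  have h2 : ‖P.eval z‖ ≤ max Cp 0 := by
    have := hCp z hz
    exact le_trans this (le_max_left _ _)
  exact mul_le_mul h1 h2 (norm_nonneg _) (le_max_right _ _)

theorem stmt6 (K : Set ℂ) (hK : IsCompact K) (n : ℕ) (w : ℂ → ℝ)
    (hw0 : ∀ z ∈ K, 0 ≤ w z) (hwb : BddAbove (w '' K))
    (husc : UpperSemicontinuousOn w K)
    (hsupp : ∃ S : Finset ℂ, ↑S ⊆ K ∧ n + 1 ≤ S.card ∧ ∀ z ∈ S, w z ≠ 0)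
    (T : Polynomial ℂ) (hmonic : T.Monic) (hdeg : T.natDegree = n)
    (hmin : ∀ P : Polynomial ℂ, P.Monic → P.natDegree = n → wnorm K w T ≤ wnorm K w P) :
    ∃ S : Finset ℂ, ↑S ⊆ {z ∈ K | w z * ‖T.eval z‖ = wnorm K w T} ∧
      n + 1 ≤ S.card := by
  obtain ⟨S₀, hS₀K, hS₀card, hS₀w⟩ := hsupp
  -- K is nonempty
  have hS₀ne : S₀.Nonempty := Finset.card_pos.mp (by omega)
  have hKne : K.Nonempty := ⟨hS₀ne.choose, hS₀K (hS₀ne.choose_spec)⟩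
  set g : ℂ → ℝ := fun z => w z * ‖T.eval z‖ with hg
  set M : ℝ := wnorm K w T with hMdef
  -- usc and boundedness of g
  have hgusc : UpperSemicontinuousOn g K :=
    usc_mul_cont husc (continuous_norm.comp T.continuous_aeval).continuousOn hw0
      (fun z _ => norm_nonneg _)
  obtain ⟨Cg, hCg0, hCg⟩ := bdd_poly hK hw0 hwb T
  have hgbdd : BddAbove (g '' K) := ⟨Cg, fun y ⟨z, hz, hzy⟩ => hzy ▸ hCg z hz⟩
  -- pointwise bound by M
  have hgleM : ∀ z ∈ K, g z ≤ M := fun z hz => le_csSup hgbdd ⟨z, hz, rfl⟩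
  -- the maximum is attained
  obtain ⟨x₀, hx₀K, hx₀max⟩ := usc_exists_max hK hKne hgusc hgbdd
  have hx₀M : g x₀ = M := le_antisymm (hgleM x₀ hx₀K)
    (csSup_le (hKne.image _) (fun y ⟨z, hz, hzy⟩ => hzy ▸ hx₀max z hz))
  set E : Set ℂ := {z ∈ K | w z * ‖T.eval z‖ = wnorm K w T} with hEdef
  have hx₀E : x₀ ∈ E := ⟨hx₀K, hx₀M⟩
  -- M > 0
  have hMpos : 0 < M := by
    obtain ⟨z, hzS, hznr⟩ : ∃ z ∈ S₀, T.eval z ≠ 0 := by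
      by_contra hall
      push_neg at hall
      have hT0 : T ≠ 0 := hmonic.ne_zero
      have hsub : S₀ ⊆ T.roots.toFinset := fun z hz => by
        rw [Multiset.mem_toFinset, Polynomial.mem_roots hT0]
        exact hall z hz
      have h1 := Finset.card_le_card hsub
      have h2 : T.roots.toFinset.card ≤ Multiset.card T.roots :=
        T.roots.toFinset_card_le
      have h3 : Multiset.card T.roots ≤ T.natDegree := T.card_roots'
      omega
    have hzK : z ∈ K := hS₀K hzS
    have hpos : 0 < g z :=
      mul_pos (lt_of_le_of_ne (hw0 z hzK) (Ne.symm (hS₀w z hzS)))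
        (norm_pos_iff.mpr hznr)
    exact lt_of_lt_of_le hpos (hgleM z hzK)
  by_contra hcon
  push_neg at hcon
  -- E is finite with at most n elements
  have hEfin : E.Finite := by
    by_contra hinf
    obtain ⟨F, hFE, hFcard⟩ := Set.Infinite.exists_subset_card_eq hinf (n+1)
    exact absurd (hcon F hFE) (by omega)
  set F : Finset ℂ := hEfin.toFinset with hFdef
  have hFsub : ↑F ⊆ E := by simp [hFdef]
  have hFcard : F.card ≤ n := by
    by_contra hgt
    exact absurd (hcon F hFsub) (by omega)
  have hFne : F.Nonempty := ⟨x₀, hEfin.mem_toFinset.mpr hx₀E⟩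
  have hn1 : 1 ≤ n := le_trans (Finset.card_pos.mpr hFne) hFcard
  -- Lagrange interpolation polynomial Q with Q = T on F, deg Q < n
  set Q : Polynomial ℂ := Lagrange.interpolate F id (fun z => T.eval z) with hQdef
  have hQeval : ∀ z ∈ F, Q.eval z = T.eval z := fun z hz =>
    Lagrange.eval_interpolate_at_node _ (Set.injOn_id _) hz
  have hQdeg : Q.natDegree < n := by
    have h1 : Q.degree < F.card := Lagrange.degree_interpolate_lt _ (Set.injOn_id _)
    rcases eq_or_ne Q 0 with h | h
    · simp [h]; omega
    · have := (Polynomial.natDegree_lt_iff_degree_lt (n := F.card) h).mpr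
        (h1.trans_le (by exact_mod_cast Nat.le_refl _))
      omega
  -- h := w * |T - Q| is usc and vanishes on E
  set h : ℂ → ℝ := fun z => w z * ‖(T - Q).eval z‖ with hhdef
  have hhusc : UpperSemicontinuousOn h K :=
    usc_mul_cont husc (continuous_norm.comp (T - Q).continuous_aeval).continuousOn hw0
      (fun z _ => norm_nonneg _)
  have hhE : ∀ z ∈ E, h z = 0 := by
    intro z hz
    have hzF : z ∈ F := hEfin.mem_toFinset.mpr hz
    simp [hhdef, Polynomial.eval_sub, hQeval z hzF]
  -- the "bad" compact set S2 where h ≥ M/2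
  set S2 : Set ℂ := {z ∈ K | M/2 ≤ h z} with hS2def
  have hS2closed : IsClosed S2 := by
    apply IsSeqClosed.isClosed
    intro u p hu hp
    have hpK : p ∈ K := hK.isClosed.mem_of_tendsto hp (Eventually.of_forall fun k => (hu k).1)
    refine ⟨hpK, ?_⟩
    by_contra hlt
    push_neg at hlt
    have hev := hhusc p hpK (M/2) hlt
    have htend : Filter.Tendsto u atTop (nhdsWithin p K) :=
      tendsto_nhdsWithin_of_tendsto_nhds_of_eventually_within _ hp
        (Eventually.of_forall fun k => (hu k).1)
    obtain ⟨k, hk⟩ := (htend.eventually hev).exists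
    exact absurd (hu k).2 (not_le.mpr hk)
  have hS2cpt : IsCompact S2 := hK.of_isClosed_subset hS2closed (fun z hz => hz.1)
  -- sup of g on S2 is < M
  obtain ⟨M', hM'lt, hM'bd⟩ : ∃ M', M' < M ∧ ∀ z ∈ S2, g z ≤ M' := by
    rcases Set.eq_empty_or_nonempty S2 with hS2e | hS2ne
    · exact ⟨0, hMpos, fun z hz => absurd hz (hS2e ▸ Set.notMem_empty z)⟩
    · obtain ⟨z₁, hz₁S2, hz₁max⟩ := usc_exists_max hS2cpt hS2ne
        (hgusc.mono (fun z hz => hz.1)) ⟨Cg, fun y ⟨z, hz, hzy⟩ => hzy ▸ hCg z hz.1⟩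
      refine ⟨g z₁, lt_of_le_of_ne (hgleM z₁ hz₁S2.1) ?_, hz₁max⟩
      intro heq
      have hz₁E : z₁ ∈ E := ⟨hz₁S2.1, heq⟩
      have := hhE z₁ hz₁E
      have := hz₁S2.2
      rw [hhE z₁ hz₁E] at this
      linarith
  -- bound for w * |Q| on K
  obtain ⟨CQ, hCQ0, hCQ⟩ := bdd_poly hK hw0 hwb Q
  -- choice of ε
  set ε : ℝ := min (1/2) ((M - M') / (2 * (CQ + 1))) with hεdef
  have hεpos : 0 < ε := by
    apply lt_min (by norm_num)
    apply div_pos (by linarith) (by linarith)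
  have hεlt1 : ε < 1 := lt_of_le_of_lt (min_le_left _ _) (by norm_num)
  have hεCQ : ε * CQ < M - M' := by
    have h1 : ε ≤ (M - M') / (2 * (CQ + 1)) := min_le_right _ _
    have h2 : ε * CQ ≤ (M - M') / (2 * (CQ + 1)) * CQ :=
      mul_le_mul_of_nonneg_right h1 hCQ0
    have h3 : (M - M') / (2 * (CQ + 1)) * CQ < M - M' := by
      rw [div_mul_eq_mul_div, div_lt_iff₀ (by linarith)]
      nlinarith
    linarith
  -- the perturbed polynomial
  set T' : Polynomial ℂ := T - Polynomial.C (ε : ℂ) * Q with hT'def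
  have hQdeg' : (Polynomial.C (ε : ℂ) * Q).natDegree < T.natDegree := by
    calc (Polynomial.C (ε : ℂ) * Q).natDegree ≤ Q.natDegree := natDegree_C_mul_le _ _
      _ < n := hQdeg
      _ = T.natDegree := hdeg.symm
  have hT'monic : T'.Monic := by
    rw [hT'def, sub_eq_add_neg]
    exact hmonic.add_of_left (by rw [Polynomial.degree_neg]; exact Polynomial.degree_lt_degree hQdeg')
  have hT'deg : T'.natDegree = n := by
    rw [hT'def, Polynomial.natDegree_sub_eq_left_of_natDegree_lt hQdeg', hdeg]
  -- pointwise estimate: the weighted norm of T' is < M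
  have hbound : ∀ z ∈ K, w z * ‖T'.eval z‖ ≤ max (M - ε * M / 2) (M' + ε * CQ) := by
    intro z hz
    by_cases hzS2 : z ∈ S2
    · -- near no extremal point is irrelevant: use the crude bound
      have h1 : ‖T'.eval z‖ ≤ ‖T.eval z‖ + ε * ‖Q.eval z‖ := by
        rw [hT'def]
        simp only [Polynomial.eval_sub, Polynomial.eval_mul, Polynomial.eval_C]
        calc ‖T.eval z - (ε:ℂ) * Q.eval z‖
            ≤ ‖T.eval z‖ + ‖(ε:ℂ) * Q.eval z‖ := by
              exact (norm_sub_le _ _)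
          _ = ‖T.eval z‖ + ε * ‖Q.eval z‖ := by
              rw [norm_mul, Complex.norm_real, Real.norm_of_nonneg hεpos.le]
      have e1 : w z * ‖T'.eval z‖
          ≤ w z * ‖T.eval z‖ + ε * (w z * ‖Q.eval z‖) := by
        have := mul_le_mul_of_nonneg_left h1 (hw0 z hz)
        nlinarith
      have e2 : w z * ‖T.eval z‖ ≤ M' := hM'bd z hzS2
      have e3 : w z * ‖Q.eval z‖ ≤ CQ := hCQ z hz
      have : w z * ‖T'.eval z‖ ≤ M' + ε * CQ := by nlinarith
      exact le_trans this (le_max_right _ _)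
    · have hhz : h z < M/2 := by
        by_contra hge
        push_neg at hge
        exact hzS2 ⟨hz, hge⟩
      have key : T'.eval z = ((1-ε : ℝ) : ℂ) * T.eval z + ((ε:ℝ):ℂ) * ((T - Q).eval z) := by
        simp only [hT'def, Polynomial.eval_sub, Polynomial.eval_mul, Polynomial.eval_C]
        push_cast
        ring
      have h1 : ‖T'.eval z‖
          ≤ (1-ε) * ‖T.eval z‖ + ε * ‖(T - Q).eval z‖ := by
        rw [key]
        calc ‖((1-ε : ℝ) : ℂ) * T.eval z + ((ε:ℝ):ℂ) * ((T - Q).eval z)‖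
            ≤ ‖((1-ε : ℝ) : ℂ) * T.eval z‖
              + ‖((ε:ℝ):ℂ) * ((T - Q).eval z)‖ := norm_add_le _ _
          _ = (1-ε) * ‖T.eval z‖ + ε * ‖(T - Q).eval z‖ := by
              rw [norm_mul, norm_mul, Complex.norm_real, Complex.norm_real,
                Real.norm_of_nonneg (by linarith : (0:ℝ) ≤ 1 - ε), Real.norm_of_nonneg hεpos.le]
      have e1 : w z * ‖T'.eval z‖
          ≤ (1-ε) * (w z * ‖T.eval z‖) + ε * (w z * ‖(T - Q).eval z‖) := by
        have := mul_le_mul_of_nonneg_left h1 (hw0 z hz)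
        nlinarith
      have e2 : w z * ‖T.eval z‖ ≤ M := hgleM z hz
      have e3 : w z * ‖(T - Q).eval z‖ ≤ M/2 := hhz.le
      have : w z * ‖T'.eval z‖ ≤ M - ε * M / 2 := by nlinarith
      exact le_trans this (le_max_left _ _)
  have hlt : wnorm K w T' < M := by
    have h1 : wnorm K w T' ≤ max (M - ε * M / 2) (M' + ε * CQ) :=
      csSup_le (hKne.image _) (fun y ⟨z, hz, hzy⟩ => hzy ▸ hbound z hz)
    have h2 : max (M - ε * M / 2) (M' + ε * CQ) < M := by
      apply max_lt
      · nlinarith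
      · linarith
    linarith
  exact absurd (hmin T' hT'monic hT'deg) (not_le.mpr hlt)
end

section
/- (Weighted alternation theorem, sufficiency) Let K be a compact subset of ℝ, n ∈ ℕ, w : K → [0,∞) a bounded upper semicontinuous function nonzero at at least n+1 points of K, and P_n a monic polynomial of degree n with real coefficients. If there exist points x₀ < x₁ < ⋯ < x_n in K such that w(x_j) P_n(x_j) = (−1)^{n−j} ‖P_n‖_{K,w} for j = 0, 1, …, n, then P_n is the weighted Chebyshev polynomial of degree n on K with respect to w. -/
open Polynomial Metric Set

/-- Each value `w z * |Q(z)|` is at most the weighted sup norm. -/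
lemma le_wnorm_aux (K : Set ℂ) (hK : IsCompact K) (w : ℂ → ℝ)
    (hw0 : ∀ z ∈ K, 0 ≤ w z) (hwb : BddAbove (w '' K)) (Q : Polynomial ℂ)
    {z : ℂ} (hz : z ∈ K) : w z * ‖Q.eval z‖ ≤ wnorm K w Q := by
  obtain ⟨Cw, hCw⟩ := hwb
  have hCw' : ∀ y ∈ K, w y ≤ Cw := fun y hy => hCw ⟨y, hy, rfl⟩
  obtain ⟨Cp, hCp⟩ := hK.exists_bound_of_continuousOn
    (Q.continuous_aeval.continuousOn (s := K))
  have hCw0 : 0 ≤ Cw := le_trans (hw0 z hz) (hCw' z hz)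
  apply le_csSup
  · refine ⟨Cw * Cp, ?_⟩
    rintro r ⟨y, hy, rfl⟩
    have h1 : ‖Q.eval y‖ ≤ Cp := by
      simpa using hCp y hy
    exact mul_le_mul (hCw' y hy) h1 (norm_nonneg _) hCw0
  · exact ⟨z, hz, rfl⟩

/-- Weighted alternation theorem (sufficiency). -/
theorem stmt9 (K : Set ℂ) (hK : IsCompact K) (hKreal : ∀ z ∈ K, z.im = 0)
    (n : ℕ) (w : ℂ → ℝ)
    (hw0 : ∀ z ∈ K, 0 ≤ w z) (hwb : BddAbove (w '' K))
    (husc : UpperSemicontinuousOn w K)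
    (hsupp : ∃ S : Finset ℂ, ↑S ⊆ K ∧ n + 1 ≤ S.card ∧ ∀ z ∈ S, w z ≠ 0)
    (P : Polynomial ℂ) (hmonic : P.Monic) (hdeg : P.natDegree = n)
    (hreal : ∀ k : ℕ, (P.coeff k).im = 0)
    (x : Fin (n + 1) → ℝ) (hmono : StrictMono x)
    (hxK : ∀ j, (x j : ℂ) ∈ K)
    (halt : ∀ j : Fin (n + 1),
      (w (x j) : ℂ) * P.eval ((x j : ℂ)) = (-1 : ℂ) ^ (n - (j : ℕ)) * (wnorm K w P : ℂ)) :
    ∀ Q : Polynomial ℂ, Q.Monic → Q.natDegree = n → wnorm K w P ≤ wnorm K w Q := by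
  intro Q hQm hQd
  by_contra hlt
  push_neg at hlt
  set M := wnorm K w P with hMdef
  have hPne : P ≠ 0 := hmonic.ne_zero
  -- M > 0
  have hMpos : 0 < M := by
    obtain ⟨S, hSK, hScard, hSw⟩ := hsupp
    obtain ⟨z0, hz0S, hz0⟩ : ∃ z0 ∈ S, P.eval z0 ≠ 0 := by
      by_contra h
      push_neg at h
      have hsub : S ⊆ P.roots.toFinset := fun z hz =>
        Multiset.mem_toFinset.2 ((mem_roots hPne).2 (h z hz))
      have : S.card ≤ n := by
        calc S.card ≤ P.roots.toFinset.card := Finset.card_le_card hsub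
          _ ≤ Multiset.card P.roots := Multiset.toFinset_card_le _
          _ ≤ P.natDegree := P.card_roots'
          _ = n := hdeg
      omega
    have hz0K : z0 ∈ K := hSK hz0S
    have h1 : 0 < w z0 * ‖P.eval z0‖ :=
      mul_pos (lt_of_le_of_ne (hw0 z0 hz0K) (Ne.symm (hSw z0 hz0S)))
        (by simpa using hz0)
    exact h1.trans_le (le_wnorm_aux K hK w hw0 hwb P hz0K)
  -- the difference polynomial
  set R := P - Q with hRdef
  have hdegP : P.degree = (n : WithBot ℕ) := by
    rw [degree_eq_natDegree hPne, hdeg]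
  have hdegQ : Q.degree = (n : WithBot ℕ) := by
    rw [degree_eq_natDegree hQm.ne_zero, hQd]
  have hRdeg : R.degree < (n : WithBot ℕ) := by
    have := degree_sub_lt (hdegP.trans hdegQ.symm) hPne
      (by rw [hmonic.leadingCoeff, hQm.leadingCoeff])
    rwa [hdegP] at this
  -- sign at the alternation points
  set s : Fin (n + 1) → ℝ := fun j => (-1 : ℝ) ^ (n - (j : ℕ)) with hsdef
  set f : ℝ → ℝ := fun t => (R.eval (t : ℂ)).re with hfdef
  have hwQ : ∀ z ∈ K, w z * ‖Q.eval z‖ ≤ wnorm K w Q :=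
    fun z hz => le_wnorm_aux K hK w hw0 hwb Q hz
  have hkey : ∀ j, 0 < s j * f (x j) := by
    intro j
    have hwj : 0 < w (x j) := by
      rcases (hw0 _ (hxK j)).lt_or_eq with h | h
      · exact h
      · exfalso
        have h2 := halt j
        rw [← h] at h2
        simp only [Complex.ofReal_zero, zero_mul] at h2
        have h3 : (M : ℂ) = 0 := by
          rcases mul_eq_zero.1 h2.symm with h4 | h4
          · exact absurd h4 (pow_ne_zero _ (by norm_num))
          · exact h4
        exact hMpos.ne' (by exact_mod_cast h3)
    have he : (w (x j) : ℂ) * R.eval ((x j : ℂ)) = (s j : ℂ) * M - (w (x j) : ℂ) * Q.eval ((x j : ℂ)) := by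
      rw [hRdef, eval_sub, mul_sub, halt j, hsdef]
      push_cast
      ring
    have hre : w (x j) * f (x j) = s j * M - w (x j) * (Q.eval ((x j : ℂ))).re := by
      have := congrArg Complex.re he
      simpa [hfdef, Complex.mul_re, Complex.sub_re] using this
    have hs2 : s j * s j = 1 := by
      rw [hsdef, ← pow_add]
      exact Even.neg_one_pow ⟨_, rfl⟩
    have hbound : s j * (w (x j) * (Q.eval ((x j : ℂ))).re) < M := by
      have h1 : s j * (w (x j) * (Q.eval ((x j : ℂ))).re) ≤ |s j * (w (x j) * (Q.eval ((x j : ℂ))).re)| :=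
        le_abs_self _
      have h2 : |s j| = 1 := by rw [hsdef]; simp
      have h3 : |s j * (w (x j) * (Q.eval ((x j : ℂ))).re)| = w (x j) * |(Q.eval ((x j : ℂ))).re| := by
        rw [abs_mul, h2, one_mul, abs_mul, abs_of_pos hwj]
      have h4 : w (x j) * |(Q.eval ((x j : ℂ))).re| ≤ w (x j) * ‖Q.eval ((x j : ℂ))‖ :=
        mul_le_mul_of_nonneg_left (Complex.abs_re_le_norm _) hwj.le
      calc s j * (w (x j) * (Q.eval ((x j : ℂ))).re) ≤ _ := h1
        _ = _ := h3
        _ ≤ _ := h4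
        _ ≤ wnorm K w Q := hwQ _ (hxK j)
        _ < M := hlt
    have heq : w (x j) * (s j * f (x j)) = M - s j * (w (x j) * (Q.eval ((x j : ℂ))).re) := by
      linear_combination s j * hre + M * hs2
    have hprod : 0 < w (x j) * (s j * f (x j)) := by rw [heq]; linarith
    rcases mul_pos_iff.1 hprod with ⟨_, h⟩ | ⟨h, _⟩
    · exact h
    · exact absurd hwj (not_lt.2 h.le)
  -- continuity and intermediate value
  have hfcont : Continuous f :=
    Complex.continuous_re.comp (R.continuous_aeval.comp Complex.continuous_ofReal)
  have hroot : ∀ j : Fin n, ∃ t, t ∈ Ioo (x j.castSucc) (x j.succ) ∧ f t = 0 := by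
    intro j
    have hab : x j.castSucc < x j.succ := hmono (Fin.castSucc_lt_succ : j.castSucc < j.succ)
    have hsa : s j.castSucc = - s j.succ := by
      simp only [hsdef, Fin.coe_castSucc, Fin.val_succ]
      have h1 : n - (j : ℕ) = (n - ((j : ℕ) + 1)) + 1 := by
        have := j.isLt; omega
      rw [h1, pow_succ]
      ring
    have ha := hkey j.castSucc
    have hb := hkey j.succ
    rcases Nat.even_or_odd (n - ((j : ℕ) + 1)) with hpar | hpar
    · have hs1 : s j.succ = 1 := by
        simp only [hsdef, Fin.val_succ]; exact hpar.neg_one_pow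
      rw [hsa, hs1] at ha; rw [hs1] at hb
      have ha' : f (x j.castSucc) < 0 := by linarith
      have hb' : 0 < f (x j.succ) := by linarith
      obtain ⟨t, ht, hft⟩ := intermediate_value_Ioo hab.le hfcont.continuousOn
        (Set.mem_Ioo.2 ⟨ha', hb'⟩)
      exact ⟨t, ht, hft⟩
    · have hs1 : s j.succ = -1 := by
        simp only [hsdef, Fin.val_succ]; exact hpar.neg_one_pow
      rw [hsa, hs1] at ha; rw [hs1] at hb
      have ha' : 0 < f (x j.castSucc) := by linarith
      have hb' : f (x j.succ) < 0 := by linarith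
      obtain ⟨t, ht, hft⟩ := intermediate_value_Ioo' hab.le hfcont.continuousOn
        (Set.mem_Ioo.2 ⟨hb', ha'⟩)
      exact ⟨t, ht, hft⟩
  choose t htmem htzero using hroot
  have htmono : StrictMono t := by
    intro i j hij
    have hle : x i.succ ≤ x j.castSucc := by
      apply hmono.monotone
      rw [Fin.le_def]
      simp only [Fin.val_succ, Fin.coe_castSucc]
      exact Fin.lt_def.1 hij
    exact lt_trans ((htmem i).2.trans_le hle) (htmem j).1
  -- the symmetrized polynomial
  set T := R + R.map (starRingEnd ℂ) with hTdef
  have hTeval : ∀ r : ℝ, T.eval (r : ℂ) = ((2 * f r : ℝ) : ℂ) := by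
    intro r
    have h1 : (R.map (starRingEnd ℂ)).eval ((starRingEnd ℂ) (r : ℂ)) =
        (starRingEnd ℂ) (R.eval (r : ℂ)) := by
      rw [eval_map, eval₂_hom]
    rw [Complex.conj_ofReal] at h1
    rw [hTdef, eval_add, h1, Complex.add_conj]
  have hf0 : f (x 0) ≠ 0 := by
    intro h
    have := hkey 0
    rw [h, mul_zero] at this
    exact lt_irrefl _ this
  have hTne : T ≠ 0 := by
    intro h
    apply hf0
    have := hTeval (x 0)
    rw [h, eval_zero] at this
    have h2 : (2 * f (x 0) : ℝ) = 0 := by exact_mod_cast this.symm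
    linarith [h2]
  have hTdeg : T.degree < (n : WithBot ℕ) := by
    apply lt_of_le_of_lt (degree_add_le _ _)
    rw [max_lt_iff]
    refine ⟨hRdeg, ?_⟩
    rwa [degree_map_eq_of_injective (RingHom.injective _)]
  have hTnat : T.natDegree < n := (natDegree_lt_iff_degree_lt hTne).2 hTdeg
  have hTzero : T = 0 := by
    apply eq_zero_of_natDegree_lt_card_of_eval_eq_zero T
      (f := fun j : Fin n => ((t j : ℝ) : ℂ))
      (Complex.ofReal_injective.comp htmono.injective)
    · intro i
      rw [hTeval, htzero i]
      norm_num
    · simpa using hTnat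
  exact hTne hTzero
end

section
/- (Weighted Rivlin–Shapiro criterion) Let K be a compact subset of ℂ, n ∈ ℕ, w : K → [0,∞) a bounded upper semicontinuous function nonzero at at least n+1 points of K, and P_n a monic polynomial of degree n. Then P_n minimizes ‖·‖_{K,w} among monic polynomials of degree n if and only if there exist m ≤ 2n+1 w-extremal points z₁, …, z_m of P_n on K and positive real numbers α₁, …, α_m with α₁ + ⋯ + α_m = 1 such that Σ_{j=1}^m α_j P_n(z_j) · conj(q(z_j)) = 0 for every polynomial q of degree at most n−1. -/
open Polynomial Metric Set

open Filter Topology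

/-- product of a nonneg usc function and a nonneg continuous function is usc on s -/
lemma usc_mul {s : Set ℂ} {f g : ℂ → ℝ} (hf : UpperSemicontinuousOn f s)
    (hf0 : ∀ z ∈ s, 0 ≤ f z) (hg : Continuous g) (hg0 : ∀ z, 0 ≤ g z) :
    UpperSemicontinuousOn (fun z => f z * g z) s := by
  intro x hx y hy
  simp only at hy
  obtain ⟨ε, hε, hεy⟩ : ∃ ε > 0, (f x + ε) * (g x + ε) < y := by
    have hc : ContinuousAt (fun ε : ℝ => (f x + ε) * (g x + ε)) 0 := by fun_prop
    have h0 : (f x + 0) * (g x + 0) < y := by simpa using hy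
    have hev : ∀ᶠ ε in 𝓝 (0:ℝ), (f x + ε) * (g x + ε) < y :=
      hc.eventually_lt continuousAt_const h0
    have := (hev.filter_mono (nhdsWithin_le_nhds (s := Ioi (0:ℝ)))).and
      (self_mem_nhdsWithin (s := Ioi (0:ℝ)) (a := (0:ℝ)))
    exact (this.exists).imp (fun ε h => ⟨h.2, h.1⟩)
  have h1 : ∀ᶠ z in 𝓝[s] x, f z < f x + ε := hf x hx _ (by linarith)
  have h2 : ∀ᶠ z in 𝓝[s] x, g z < g x + ε := by
    refine Filter.Eventually.filter_mono nhdsWithin_le_nhds ?_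
    exact hg.continuousAt.eventually_lt continuousAt_const (by linarith)
  have h3 : ∀ᶠ z in 𝓝[s] x, z ∈ s := self_mem_nhdsWithin
  filter_upwards [h1, h2, h3] with z hz1 hz2 hz3
  calc f z * g z < (f x + ε) * (g x + ε) :=
        mul_lt_mul'' hz1 hz2 (hf0 z hz3) (hg0 z)
    _ < y := hεy



/-- usc function on a nonempty compact set attains its maximum -/
lemma usc_max {s : Set ℂ} {f : ℂ → ℝ} (hs : IsCompact s) (hne : s.Nonempty)
    (hf : UpperSemicontinuousOn f s) (hb : BddAbove (f '' s)) :
    ∃ x ∈ s, ∀ y ∈ s, f y ≤ f x := by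
  by_contra hcon
  push_neg at hcon
  set M := sSup (f '' s) with hM
  have hlt : ∀ x ∈ s, f x < M := by
    intro x hx
    obtain ⟨y, hy, hxy⟩ := hcon x hx
    exact lt_of_lt_of_le hxy (le_csSup hb ⟨y, hy, rfl⟩)
  have key : ∀ x ∈ s, ∃ U : Set ℂ, IsOpen U ∧ x ∈ U ∧ ∃ c < M, ∀ z ∈ U ∩ s, f z < c := by
    intro x hx
    have h2 : f x < (f x + M) / 2 := by linarith [hlt x hx]
    have := hf x hx _ h2
    rw [eventually_nhdsWithin_iff] at this
    obtain ⟨U, hUsub, hUopen, hxU⟩ := _root_.eventually_nhds_iff.mp this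
    exact ⟨U, hUopen, hxU, (f x + M)/2, by linarith [hlt x hx],
      fun z hz => hUsub z hz.1 hz.2⟩
  choose! U hUopen hxU c hcM hcU using key
  obtain ⟨t, hts, hcover⟩ := hs.elim_nhds_subcover U
    (fun x hx => (hUopen x hx).mem_nhds (hxU x hx))
  have htne : t.Nonempty := by
    by_contra hte
    rw [Finset.not_nonempty_iff_eq_empty] at hte
    obtain ⟨x, hx⟩ := hne
    have := hcover hx
    simp [hte] at this
  have hMle : M ≤ t.sup' htne c := by
    apply csSup_le (hne.image f)
    rintro _ ⟨z, hz, rfl⟩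
    obtain ⟨x, hxt, hzU⟩ := by simpa using hcover hz
    exact le_trans (hcU x (hts x hxt) z ⟨hzU, hz⟩).le (Finset.le_sup' c hxt)
  obtain ⟨x, hxt, hxe⟩ := Finset.exists_mem_eq_sup' htne c
  rw [hxe] at hMle
  exact absurd hMle (not_le.mpr (hcM x (hts x hxt)))

/-- superlevel set of a usc function on a compact set is compact -/
lemma usc_superlevel_compact {s : Set ℂ} {f : ℂ → ℝ} (hs : IsCompact s)
    (hf : UpperSemicontinuousOn f s) (M : ℝ) :
    IsCompact {z ∈ s | M ≤ f z} := by
  refine hs.of_isClosed_subset ?_ (fun z hz => hz.1)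
  rw [← isOpen_compl_iff, isOpen_iff_mem_nhds]
  intro x hx
  by_cases hxs : x ∈ s
  · have hfx : f x < M := by
      by_contra h
      exact hx ⟨hxs, not_lt.mp h⟩
    have := hf x hxs M hfx
    rw [eventually_nhdsWithin_iff] at this
    filter_upwards [this] with z hz
    intro hzmem
    exact absurd hzmem.2 (not_le.mpr (hz hzmem.1))
  · have : sᶜ ∈ 𝓝 x := hs.isClosed.isOpen_compl.mem_nhds hxs
    filter_upwards [this] with z hz hmem
    exact hz hmem.1

/-- Convex hull of a compact set in a finite-dimensional real normed space is compact. -/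
lemma cpt_convexHull {E : Type*} [NormedAddCommGroup E] [NormedSpace ℝ E]
    [FiniteDimensional ℝ E] {s : Set E} (hs : IsCompact s) :
    IsCompact (convexHull ℝ s) := by
  rcases s.eq_empty_or_nonempty with rfl | ⟨s₀, hs₀⟩
  · simp [isCompact_empty]
  set N := Module.finrank ℝ E + 1 with hN
  set g : (Fin N → ℝ) × (Fin N → E) → E := fun p => ∑ i, p.1 i • p.2 i with hg
  have hgc : Continuous g := by fun_prop
  have hdom : IsCompact ((stdSimplex ℝ (Fin N)) ×ˢ (univ.pi fun _ : Fin N => s)) :=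
    (isCompact_stdSimplex _ _).prod (isCompact_univ_pi fun _ => hs)
  have himg : g '' ((stdSimplex ℝ (Fin N)) ×ˢ (univ.pi fun _ : Fin N => s))
      = convexHull ℝ s := by
    apply Subset.antisymm
    · rintro _ ⟨⟨w, x⟩, ⟨⟨hw0, hw1⟩, hx⟩, rfl⟩
      exact (convex_convexHull ℝ s).sum_mem (fun i _ => hw0 i) hw1
        (fun i _ => subset_convexHull ℝ s (hx i (mem_univ i)))
    · intro x hx
      obtain ⟨ι, hι, z, wt, hrange, hai, hw0, hw1, hsum⟩ :=
        eq_pos_convex_span_of_mem_convexHull hx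
      have hcard : Fintype.card ι ≤ N := by
        refine le_trans hai.card_le_finrank_succ ?_
        have := Submodule.finrank_le (vectorSpan ℝ (Set.range z))
        omega
      obtain ⟨e⟩ : Nonempty (ι ↪ Fin N) :=
        Function.Embedding.nonempty_of_card_le (by simpa using hcard)
      classical
      set w' : Fin N → ℝ := fun j => if h : ∃ i, e i = j then wt h.choose else 0 with hw'
      set x' : Fin N → E := fun j => if h : ∃ i, e i = j then z h.choose else s₀ with hx'
      have hwe : ∀ i, w' (e i) = wt i := by
        intro i
        have h : ∃ i', e i' = e i := ⟨i, rfl⟩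
        simp only [hw', dif_pos h]
        congr 1
        exact e.injective h.choose_spec
      have hxe : ∀ i, x' (e i) = z i := by
        intro i
        have h : ∃ i', e i' = e i := ⟨i, rfl⟩
        simp only [hx', dif_pos h]
        congr 1
        exact e.injective h.choose_spec
      refine ⟨⟨w', x'⟩, ⟨⟨?_, ?_⟩, ?_⟩, ?_⟩
      · intro j
        by_cases h : ∃ i, e i = j
        · simp only [hw', dif_pos h]; exact (hw0 _).le
        · simp [hw', dif_neg h]
      · calc ∑ j : Fin N, w' j = ∑ j ∈ Finset.univ.map e, w' j := by
              refine (Finset.sum_subset (Finset.subset_univ _) fun j _ hj => ?_).symm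
              have h : ¬ ∃ i, e i = j := by
                intro ⟨i, hi⟩; exact hj (Finset.mem_map.mpr ⟨i, Finset.mem_univ i, hi⟩)
              simp [hw', dif_neg h]
          _ = ∑ i, w' (e i) := Finset.sum_map _ _ _
          _ = 1 := by simp only [hwe]; exact hw1
      · intro j _
        by_cases h : ∃ i, e i = j
        · simp only [hx', dif_pos h]; exact hrange ⟨h.choose, rfl⟩
        · simp only [hx', dif_neg h]; exact hs₀
      · show ∑ j : Fin N, w' j • x' j = x
        calc ∑ j : Fin N, w' j • x' j = ∑ j ∈ Finset.univ.map e, w' j • x' j := by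
              refine (Finset.sum_subset (Finset.subset_univ _) fun j _ hj => ?_).symm
              have h : ¬ ∃ i, e i = j := by
                intro ⟨i, hi⟩; exact hj (Finset.mem_map.mpr ⟨i, Finset.mem_univ i, hi⟩)
              simp [hw', dif_neg h]
          _ = ∑ i, w' (e i) • x' (e i) := Finset.sum_map _ _ _
          _ = x := by simp only [hwe, hxe]; exact hsum
  rw [← himg]
  exact hdom.image hgc

lemma wnorm_bdd {K : Set ℂ} (hK : IsCompact K) {w : ℂ → ℝ}
    (hw0 : ∀ z ∈ K, 0 ≤ w z) (hwb : BddAbove (w '' K)) (Q : Polynomial ℂ) :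
    BddAbove ((fun z => w z * ‖Q.eval z‖) '' K) := by
  obtain ⟨B, hB⟩ := hwb
  obtain ⟨C, hC⟩ := hK.exists_bound_of_continuousOn
    (Continuous.continuousOn (by continuity : Continuous fun z => Q.eval z))
  refine ⟨max B 0 * C, ?_⟩
  rintro _ ⟨z, hz, rfl⟩
  have h1 : w z ≤ max B 0 := le_trans (hB ⟨z, hz, rfl⟩) (le_max_left _ _)
  have h2 : ‖Q.eval z‖ ≤ C := by simpa using hC z hz
  exact mul_le_mul h1 h2 (norm_nonneg _) (le_max_right _ _)

lemma le_wnorm {K : Set ℂ} (hK : IsCompact K) {w : ℂ → ℝ}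
    (hw0 : ∀ z ∈ K, 0 ≤ w z) (hwb : BddAbove (w '' K)) (Q : Polynomial ℂ)
    {z : ℂ} (hz : z ∈ K) : w z * ‖Q.eval z‖ ≤ wnorm K w Q :=
  le_csSup (wnorm_bdd hK hw0 hwb Q) ⟨z, hz, rfl⟩

lemma wnorm_le {K : Set ℂ} (hKne : K.Nonempty) {w : ℂ → ℝ} {Q : Polynomial ℂ} {c : ℝ}
    (h : ∀ z ∈ K, w z * ‖Q.eval z‖ ≤ c) : wnorm K w Q ≤ c :=
  csSup_le (hKne.image _) (by rintro _ ⟨z, hz, rfl⟩; exact h z hz)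

lemma wnorm_pos {K : Set ℂ} (hK : IsCompact K) {n : ℕ} {w : ℂ → ℝ}
    (hw0 : ∀ z ∈ K, 0 ≤ w z) (hwb : BddAbove (w '' K))
    (hsupp : ∃ S : Finset ℂ, ↑S ⊆ K ∧ n + 1 ≤ S.card ∧ ∀ z ∈ S, w z ≠ 0)
    {Q : Polynomial ℂ} (hmonic : Q.Monic) (hdeg : Q.natDegree = n) :
    0 < wnorm K w Q := by
  obtain ⟨S, hSK, hScard, hSw⟩ := hsupp
  by_contra hc
  push_neg at hc
  have hz0 : ∀ z ∈ S, Q.eval z = 0 := by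
    intro z hzS
    have hzK : z ∈ K := hSK hzS
    have h1 : w z * ‖Q.eval z‖ ≤ 0 := le_trans (le_wnorm hK hw0 hwb Q hzK) hc
    have h2 : 0 ≤ w z * ‖Q.eval z‖ :=
      mul_nonneg (hw0 z hzK) (norm_nonneg _)
    have h3 : w z * ‖Q.eval z‖ = 0 := le_antisymm h1 h2
    rcases mul_eq_zero.mp h3 with h | h
    · exact absurd h (hSw z hzS)
    · simpa using h
  have hQne : Q ≠ 0 := hmonic.ne_zero
  have hsub : S ⊆ Q.roots.toFinset := by
    intro z hz
    rw [Multiset.mem_toFinset, mem_roots hQne]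
    exact hz0 z hz
  have := (Finset.card_le_card hsub).trans
    ((Multiset.toFinset_card_le _).trans (Q.card_roots' |>.trans_eq hdeg))
  omega

lemma backward_dir {K : Set ℂ} (hK : IsCompact K) {n : ℕ} {w : ℂ → ℝ}
    (hw0 : ∀ z ∈ K, 0 ≤ w z) (hwb : BddAbove (w '' K))
    (hsupp : ∃ S : Finset ℂ, ↑S ⊆ K ∧ n + 1 ≤ S.card ∧ ∀ z ∈ S, w z ≠ 0)
    {P : Polynomial ℂ} (hmonic : P.Monic) (hdeg : P.natDegree = n)
    {m : ℕ} (z : Fin m → ℂ) (α : Fin m → ℝ)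
    (hzK : ∀ j, z j ∈ K ∧ w (z j) * ‖P.eval (z j)‖ = wnorm K w P)
    (hα : ∀ j, 0 < α j) (hα1 : (∑ j, α j) = 1)
    (horth : ∀ q : Polynomial ℂ, q.degree < n →
      (∑ j, (α j : ℂ) * P.eval (z j) * (starRingEnd ℂ) (q.eval (z j))) = 0) :
    ∀ Q : Polynomial ℂ, Q.Monic → Q.natDegree = n → wnorm K w P ≤ wnorm K w Q := by
  intro Q hQm hQd
  set M := wnorm K w P with hM
  set NQ := wnorm K w Q with hNQ
  have hMpos : 0 < M := wnorm_pos hK hw0 hwb hsupp hmonic hdeg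
  have hNpos : 0 < NQ := wnorm_pos hK hw0 hwb hsupp hQm hQd
  have hm : m ≠ 0 := by
    rintro rfl
    simp at hα1
  haveI : Nonempty (Fin m) := Fin.pos_iff_nonempty.mp (Nat.pos_of_ne_zero hm)
  -- degree of Q - P
  have hPd : P.degree = (n : WithBot ℕ) := by
    rw [Polynomial.degree_eq_natDegree hmonic.ne_zero, hdeg]
  have hQdeg : Q.degree = (n : WithBot ℕ) := by
    rw [Polynomial.degree_eq_natDegree hQm.ne_zero, hQd]
  have hqdeg : (Q - P).degree < (n : WithBot ℕ) := by
    rw [← hQdeg]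
    exact Polynomial.degree_sub_lt (hQdeg.trans hPd.symm) hQm.ne_zero
      (by rw [hQm.leadingCoeff, hmonic.leadingCoeff])
  have h0 := horth (Q - P) hqdeg
  have hEq : (∑ j, (α j : ℂ) * P.eval (z j) * (starRingEnd ℂ) (Q.eval (z j)))
      = ∑ j, (α j : ℂ) * P.eval (z j) * (starRingEnd ℂ) (P.eval (z j)) := by
    rw [← sub_eq_zero, ← Finset.sum_sub_distrib]
    rw [← h0]
    congr 1
    ext j
    simp [Polynomial.eval_sub, map_sub]
    ring
  -- weights positive at the extremal points
  have hwpos : ∀ j, 0 < w (z j) := by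
    intro j
    rcases (hw0 _ (hzK j).1).lt_or_eq with h | h
    · exact h
    · exfalso
      have hM0 : M = 0 := by rw [← (hzK j).2, ← h, zero_mul]
      linarith
  have hPabs : ∀ j, ‖P.eval (z j)‖ = M / w (z j) := by
    intro j
    rw [eq_div_iff (hwpos j).ne', mul_comm]
    exact (hzK j).2
  have hQabs : ∀ j, ‖Q.eval (z j)‖ ≤ NQ / w (z j) := by
    intro j
    rw [le_div_iff₀ (hwpos j), mul_comm]
    exact le_wnorm hK hw0 hwb Q (hzK j).1
  set T : ℝ := ∑ j, α j * ‖P.eval (z j)‖ ^ 2 with hT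
  have hTpos : 0 < T := by
    apply Finset.sum_pos _ Finset.univ_nonempty
    intro j _
    apply mul_pos (hα j)
    rw [hPabs j]
    exact pow_pos (div_pos hMpos (hwpos j)) 2
  have hTC : ((T : ℝ) : ℂ) = ∑ j, (α j : ℂ) * P.eval (z j) * (starRingEnd ℂ) (P.eval (z j)) := by
    rw [hT]
    push_cast
    congr 1
    ext j
    rw [mul_assoc, Complex.mul_conj, Complex.normSq_eq_norm_sq]
    push_cast
    ring
  have hTabs : T = ‖((T : ℝ) : ℂ)‖ := by
    rw [Complex.norm_real, Real.norm_eq_abs, abs_of_pos hTpos]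
  have hchain : T ≤ (NQ / M) * T := by
    calc T = ‖∑ j, (α j : ℂ) * P.eval (z j) * (starRingEnd ℂ) (Q.eval (z j))‖ := by
          rw [hEq, ← hTC, ← hTabs]
      _ ≤ ∑ j, ‖(α j : ℂ) * P.eval (z j) * (starRingEnd ℂ) (Q.eval (z j))‖ :=
          norm_sum_le _ _
      _ ≤ ∑ j, α j * (M / w (z j)) * (NQ / w (z j)) := by
          apply Finset.sum_le_sum
          intro j _
          rw [norm_mul, norm_mul, Complex.norm_real, Real.norm_eq_abs, Complex.norm_conj, abs_of_pos (hα j), hPabs j]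
          apply mul_le_mul_of_nonneg_left (hQabs j)
          exact mul_nonneg (hα j).le (div_nonneg hMpos.le (hwpos j).le)
      _ = (NQ / M) * T := by
          rw [hT, Finset.mul_sum]
          apply Finset.sum_congr rfl
          intro j _
          rw [hPabs j]
          field_simp [hMpos.ne', (hwpos j).ne']
  have : 1 ≤ NQ / M := by
    by_contra h
    push_neg at h
    nlinarith
  rw [le_div_iff₀ hMpos] at this
  linarith

noncomputable def Phi (P : Polynomial ℂ) (n : ℕ) : ℂ → (Fin n → ℂ) :=
  fun ζ k => P.eval ζ * (starRingEnd ℂ) (ζ ^ (k : ℕ))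

lemma extraction {n : ℕ} {P : Polynomial ℂ} {E : Set ℂ}
    (hhull : (0 : Fin n → ℂ) ∈ convexHull ℝ (Phi P n '' E)) :
    ∃ (m : ℕ), m ≤ 2 * n + 1 ∧
      ∃ (z : Fin m → ℂ) (α : Fin m → ℝ),
        Function.Injective z ∧ (∀ j, z j ∈ E) ∧
        (∀ j, 0 < α j) ∧ (∑ j, α j) = 1 ∧
        ∀ q : Polynomial ℂ, q.degree < n →
          (∑ j, (α j : ℂ) * P.eval (z j) * (starRingEnd ℂ) (q.eval (z j))) = 0 := by
  obtain ⟨ι, hι, y, wt, hrange, hai, hwt0, hwt1, hsum⟩ :=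
    eq_pos_convex_span_of_mem_convexHull hhull
  -- cardinality bound
  have hcard : Fintype.card ι ≤ 2 * n + 1 := by
    have h1 := hai.card_le_finrank_succ
    have h2 := Submodule.finrank_le (vectorSpan ℝ (Set.range y))
    have h3 : Module.finrank ℝ (Fin n → ℂ) = 2 * n := by
      rw [Module.finrank_pi_fintype, Complex.finrank_real_complex]
      simp [Finset.sum_const, mul_comm]
    omega
  -- choose preimages
  have hpre : ∀ i : ι, ∃ ζ, ζ ∈ E ∧ Phi P n ζ = y i := by
    intro i
    obtain ⟨ζ, hζE, hζ⟩ := hrange ⟨i, rfl⟩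
    exact ⟨ζ, hζE, hζ⟩
  choose ζ hζE hζΦ using hpre
  have hζinj : Function.Injective ζ := by
    intro i i' h
    apply hai.injective
    rw [← hζΦ i, ← hζΦ i', h]
  set e := (Fintype.equivFin ι).symm with he
  refine ⟨Fintype.card ι, hcard, ζ ∘ e, wt ∘ e, hζinj.comp e.injective,
    fun j => hζE (e j), fun j => hwt0 (e j), ?_, ?_⟩
  · exact e.sum_comp wt |>.trans hwt1
  · intro q hq
    -- the componentwise identities
    have hcomp : ∀ k : Fin n,
        (∑ j, ((wt ∘ e) j : ℂ) * P.eval (ζ (e j)) * (starRingEnd ℂ) ((ζ (e j)) ^ (k : ℕ))) = 0 := by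
      intro k
      have h0 : (∑ i, wt i • y i) k = 0 := by rw [hsum]; rfl
      rw [Finset.sum_apply] at h0
      have h1 : ∑ i, (wt i : ℂ) * P.eval (ζ i) * (starRingEnd ℂ) ((ζ i) ^ (k : ℕ)) = 0 := by
        rw [← h0]
        apply Finset.sum_congr rfl
        intro i _
        rw [Pi.smul_apply, ← hζΦ i]
        simp only [Phi, Complex.real_smul]
        ring
      rw [← e.sum_comp (fun i => (wt i : ℂ) * P.eval (ζ i) * (starRingEnd ℂ) ((ζ i) ^ (k : ℕ)))]
        at h1
      exact h1
    -- natDegree bound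
    have hnd : ∀ ξ : ℂ, q.eval ξ = ∑ k ∈ Finset.range n, q.coeff k * ξ ^ k := by
      intro ξ
      rcases eq_or_ne q 0 with rfl | hq0
      · simp
      · exact Polynomial.eval_eq_sum_range'
          ((Polynomial.natDegree_lt_iff_degree_lt hq0).mpr hq) ξ
    calc (∑ j, ((wt ∘ e) j : ℂ) * P.eval (ζ (e j)) * (starRingEnd ℂ) (q.eval (ζ (e j))))
        = ∑ j, ∑ k ∈ Finset.range n, (starRingEnd ℂ) (q.coeff k) *
            (((wt ∘ e) j : ℂ) * P.eval (ζ (e j)) * (starRingEnd ℂ) ((ζ (e j)) ^ k)) := by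
          apply Finset.sum_congr rfl
          intro j _
          rw [hnd, map_sum, Finset.mul_sum]
          apply Finset.sum_congr rfl
          intro k _
          rw [map_mul]
          ring
      _ = ∑ k ∈ Finset.range n, (starRingEnd ℂ) (q.coeff k) *
            ∑ j, (((wt ∘ e) j : ℂ) * P.eval (ζ (e j)) * (starRingEnd ℂ) ((ζ (e j)) ^ k)) := by
          rw [Finset.sum_comm]
          apply Finset.sum_congr rfl
          intro k _
          rw [Finset.mul_sum]
      _ = 0 := by
          apply Finset.sum_eq_zero
          intro k hk
          rw [hcomp ⟨k, Finset.mem_range.mp hk⟩, mul_zero]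

lemma perturb {K : Set ℂ} (hK : IsCompact K) (hKne : K.Nonempty) {n : ℕ} {w : ℂ → ℝ}
    (hw0 : ∀ z ∈ K, 0 ≤ w z) (hwb : BddAbove (w '' K))
    (husc : UpperSemicontinuousOn w K)
    (hsupp : ∃ S : Finset ℂ, ↑S ⊆ K ∧ n + 1 ≤ S.card ∧ ∀ z ∈ S, w z ≠ 0)
    {P : Polynomial ℂ} (hmonic : P.Monic) (hdeg : P.natDegree = n)
    (hmin : ∀ Q : Polynomial ℂ, Q.Monic → Q.natDegree = n → wnorm K w P ≤ wnorm K w Q)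
    {q : Polynomial ℂ} (hqdeg : q.degree < (n : WithBot ℕ)) {u : ℝ} (hu : 0 < u)
    (hqE : ∀ ζ ∈ K, wnorm K w P ≤ w ζ * ‖P.eval ζ‖ →
      u < (P.eval ζ * (starRingEnd ℂ) (q.eval ζ)).re) :
    False := by
  set M := wnorm K w P with hM
  have hMpos : 0 < M := wnorm_pos hK hw0 hwb hsupp hmonic hdeg
  -- continuous auxiliary functions
  have hqc : Continuous fun ζ : ℂ => q.eval ζ := by continuity
  have hPc : Continuous fun ζ : ℂ => P.eval ζ := by continuity
  set h : ℂ → ℝ := fun ζ => (P.eval ζ * (starRingEnd ℂ) (q.eval ζ)).re with hh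
  have hhc : Continuous h := by
    apply Complex.continuous_re.comp
    exact hPc.mul (Complex.continuous_conj.comp hqc)
  set U : Set ℂ := h ⁻¹' (Ioi (u / 2)) with hU
  have hUopen : IsOpen U := (isOpen_Ioi).preimage hhc
  set f : ℂ → ℝ := fun ζ => w ζ * ‖P.eval ζ‖ with hf
  have hfusc : UpperSemicontinuousOn f K :=
    usc_mul husc hw0 (continuous_norm.comp hPc) (fun z => norm_nonneg _)
  have hEU : ∀ ζ ∈ K, M ≤ f ζ → ζ ∈ U := by
    intro ζ hζ hfζ
    have := hqE ζ hζ hfζ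
    simp only [hU, mem_preimage, mem_Ioi]
    linarith
  -- bound away from M on K \ U
  have hM1 : ∃ M₁, M₁ < M ∧ ∀ ζ ∈ K \ U, f ζ ≤ M₁ := by
    rcases (K \ U).eq_empty_or_nonempty with hemp | hne
    · exact ⟨0, hMpos, by simp [hemp]⟩
    · have hcpt : IsCompact (K \ U) := hK.diff hUopen
      have husc' : UpperSemicontinuousOn f (K \ U) := hfusc.mono diff_subset
      have hbdd : BddAbove (f '' (K \ U)) :=
        (wnorm_bdd hK hw0 hwb P).mono (image_mono diff_subset)
      obtain ⟨x₁, hx₁, hx₁max⟩ := usc_max hcpt hne husc' hbdd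
      refine ⟨f x₁, ?_, hx₁max⟩
      have hle : f x₁ ≤ M := le_wnorm hK hw0 hwb P hx₁.1
      rcases hle.lt_or_eq with hlt | heq
      · exact hlt
      · exact absurd (hEU x₁ hx₁.1 heq.ge) hx₁.2
  obtain ⟨M₁, hM₁lt, hM₁⟩ := hM1
  -- bounds B and D
  obtain ⟨B₀, hB₀⟩ := id hwb
  set B := max B₀ 0 with hB
  have hwB : ∀ ζ ∈ K, w ζ ≤ B := fun ζ hζ =>
    le_trans (hB₀ ⟨ζ, hζ, rfl⟩) (le_max_left _ _)
  have hB0 : 0 ≤ B := le_max_right _ _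
  obtain ⟨D₀, hD₀⟩ := hK.exists_bound_of_continuousOn hqc.continuousOn
  set D := max D₀ 1 with hD
  have hqD : ∀ ζ ∈ K, ‖q.eval ζ‖ ≤ D := fun ζ hζ =>
    le_trans (by simpa using hD₀ ζ hζ) (le_max_left _ _)
  have hD1 : (1:ℝ) ≤ D := le_max_right _ _
  have hDpos : (0:ℝ) < D := lt_of_lt_of_le one_pos hD1
  -- choice of t
  set t := min ((M - M₁) / (B * D + 1)) (u / (2 * D ^ 2)) with ht
  have htpos : 0 < t := by
    apply lt_min
    · apply div_pos (by linarith) (by positivity)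
    · positivity
  have ht1 : t * (B * D) < M - M₁ := by
    have h1 : t ≤ (M - M₁) / (B * D + 1) := min_le_left _ _
    have h2 : t * (B * D) < t * (B * D + 1) := by nlinarith
    calc t * (B * D) < t * (B * D + 1) := h2
      _ ≤ ((M - M₁) / (B * D + 1)) * (B * D + 1) := by
          apply mul_le_mul_of_nonneg_right h1 (by positivity)
      _ = M - M₁ := by field_simp
  have ht2 : t * D ^ 2 ≤ u / 2 := by
    have h1 : t ≤ u / (2 * D ^ 2) := min_le_right _ _
    calc t * D ^ 2 ≤ (u / (2 * D ^ 2)) * D ^ 2 := by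
          apply mul_le_mul_of_nonneg_right h1 (by positivity)
      _ = u / 2 := by field_simp
  -- the competitor polynomial
  set Q : Polynomial ℂ := P + -(Polynomial.C (t : ℂ) * q) with hQ
  have hdq : (-(Polynomial.C (t : ℂ) * q)).degree < P.degree := by
    rw [Polynomial.degree_neg]
    calc (Polynomial.C (t : ℂ) * q).degree
        ≤ (Polynomial.C (t : ℂ)).degree + q.degree := Polynomial.degree_mul_le _ _
      _ ≤ 0 + q.degree := add_le_add_left Polynomial.degree_C_le _
      _ = q.degree := zero_add _
      _ < (n : WithBot ℕ) := hqdeg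
      _ = P.degree := by rw [Polynomial.degree_eq_natDegree hmonic.ne_zero, hdeg]
  have hQmonic : Q.Monic := hmonic.add_of_left hdq
  have hQdeg : Q.natDegree = n := by
    have := Polynomial.degree_add_eq_left_of_degree_lt hdq
    rw [← hQ] at this
    have h2 : Q.degree = (n : WithBot ℕ) := by
      rw [this, Polynomial.degree_eq_natDegree hmonic.ne_zero, hdeg]
    exact Polynomial.natDegree_eq_of_degree_eq_some h2
  have hQeval : ∀ ζ : ℂ, Q.eval ζ = P.eval ζ - (t : ℂ) * q.eval ζ := by
    intro ζ; simp [hQ, sub_eq_add_neg]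
  -- pointwise strict bound
  have hptwise : ∀ ζ ∈ K, w ζ * ‖Q.eval ζ‖ < M := by
    intro ζ hζ
    by_cases hζU : ζ ∈ U
    · rcases (hw0 ζ hζ).lt_or_eq with hwpos | hw0'
      · -- w ζ > 0 : use the square estimate
        have hsq : (w ζ * ‖Q.eval ζ‖) ^ 2 < M ^ 2 := by
          have habs2 : ‖Q.eval ζ‖ ^ 2
              = ‖P.eval ζ‖ ^ 2 + t ^ 2 * ‖q.eval ζ‖ ^ 2
                - 2 * t * h ζ := by
            have e1 : Complex.normSq (Q.eval ζ) = Complex.normSq (P.eval ζ)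
                + Complex.normSq ((t:ℂ) * q.eval ζ)
                - 2 * ((P.eval ζ) * (starRingEnd ℂ) ((t:ℂ) * q.eval ζ)).re := by
              rw [hQeval]; exact Complex.normSq_sub _ _
            have e2 : ((P.eval ζ) * (starRingEnd ℂ) ((t:ℂ) * q.eval ζ)).re = t * h ζ := by
              rw [map_mul, Complex.conj_ofReal,
                show P.eval ζ * ((t:ℂ) * (starRingEnd ℂ) (q.eval ζ))
                  = (t:ℂ) * (P.eval ζ * (starRingEnd ℂ) (q.eval ζ)) from by ring,
                Complex.re_ofReal_mul]
            have e3 : Complex.normSq ((t:ℂ) * q.eval ζ)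
                = t ^ 2 * ‖q.eval ζ‖ ^ 2 := by
              rw [Complex.normSq_mul, Complex.normSq_ofReal, ← Complex.sq_norm]; ring
            rw [Complex.sq_norm, Complex.sq_norm, Complex.sq_norm, e1, e2, e3,
              Complex.sq_norm]
            ring
          have hhζ : u / 2 < h ζ := hζU
          have hfle : f ζ ≤ M := le_wnorm hK hw0 hwb P hζ
          have hqζ : ‖q.eval ζ‖ ≤ D := hqD ζ hζ
          have key : w ζ ^ 2 * (t ^ 2 * ‖q.eval ζ‖ ^ 2 - 2 * t * h ζ)
              < 0 := by
            have h1 : t ^ 2 * ‖q.eval ζ‖ ^ 2 ≤ t * (t * D ^ 2) := by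
              have : ‖q.eval ζ‖ ^ 2 ≤ D ^ 2 := by
                apply pow_le_pow_left₀ (norm_nonneg _) hqζ
              nlinarith
            have h2 : t * (t * D ^ 2) ≤ t * (u / 2) := by
              apply mul_le_mul_of_nonneg_left ht2 htpos.le
            have hX : t ^ 2 * ‖q.eval ζ‖ ^ 2 - 2 * t * h ζ < 0 := by
              nlinarith [mul_lt_mul_of_pos_left hhζ htpos]
            exact mul_neg_of_pos_of_neg (pow_pos hwpos 2) hX
          calc (w ζ * ‖Q.eval ζ‖) ^ 2
              = w ζ ^ 2 * ‖Q.eval ζ‖ ^ 2 := by ring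
            _ = (w ζ * ‖P.eval ζ‖) ^ 2
                + w ζ ^ 2 * (t ^ 2 * ‖q.eval ζ‖ ^ 2 - 2 * t * h ζ) := by
                rw [habs2]; ring
            _ < (w ζ * ‖P.eval ζ‖) ^ 2 := by linarith
            _ ≤ M ^ 2 := by
                apply pow_le_pow_left₀ (mul_nonneg (hw0 ζ hζ) (norm_nonneg _)) hfle
        exact lt_of_pow_lt_pow_left₀ 2 hMpos.le hsq
      · rw [← hw0', zero_mul]; exact hMpos
    · -- ζ ∈ K \ U
      have hfζ : f ζ ≤ M₁ := hM₁ ζ ⟨hζ, hζU⟩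
      calc w ζ * ‖Q.eval ζ‖
          ≤ w ζ * (‖P.eval ζ‖ + t * ‖q.eval ζ‖) := by
            apply mul_le_mul_of_nonneg_left _ (hw0 ζ hζ)
            rw [hQeval]
            calc ‖P.eval ζ - (t:ℂ) * q.eval ζ‖
                ≤ ‖P.eval ζ‖ + ‖(t:ℂ) * q.eval ζ‖ := by
                  rw [sub_eq_add_neg]
                  refine (norm_add_le _ _).trans ?_
                  rw [norm_neg]
              _ = ‖P.eval ζ‖ + t * ‖q.eval ζ‖ := by
                  rw [norm_mul, Complex.norm_real, Real.norm_eq_abs, abs_of_pos htpos]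
        _ = f ζ + w ζ * (t * ‖q.eval ζ‖) := by rw [hf]; ring
        _ ≤ M₁ + B * (t * D) := by
            have : w ζ * (t * ‖q.eval ζ‖) ≤ B * (t * D) := by
              apply mul_le_mul (hwB ζ hζ) _ (by positivity) hB0
              exact mul_le_mul_of_nonneg_left (hqD ζ hζ) htpos.le
            linarith
        _ < M := by nlinarith
  -- conclude
  have hQc : Continuous fun ζ : ℂ => Q.eval ζ := Q.continuous
  have hQnorm : wnorm K w Q < M := by
    obtain ⟨x₀, hx₀K, hx₀max⟩ := usc_max hK hKne
      (usc_mul husc hw0 (continuous_norm.comp hQc) fun z => norm_nonneg _)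
      (wnorm_bdd hK hw0 hwb Q)
    calc wnorm K w Q ≤ w x₀ * ‖Q.eval x₀‖ :=
          wnorm_le hKne fun ζ hζ => hx₀max ζ hζ
      _ < M := hptwise x₀ hx₀K
  exact absurd (hmin Q hQmonic hQdeg) (not_le.mpr hQnorm)

lemma hull_mem {K : Set ℂ} (hK : IsCompact K) (hKne : K.Nonempty) {n : ℕ} {w : ℂ → ℝ}
    (hw0 : ∀ z ∈ K, 0 ≤ w z) (hwb : BddAbove (w '' K))
    (husc : UpperSemicontinuousOn w K)
    (hsupp : ∃ S : Finset ℂ, ↑S ⊆ K ∧ n + 1 ≤ S.card ∧ ∀ z ∈ S, w z ≠ 0)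
    {P : Polynomial ℂ} (hmonic : P.Monic) (hdeg : P.natDegree = n)
    (hmin : ∀ Q : Polynomial ℂ, Q.Monic → Q.natDegree = n → wnorm K w P ≤ wnorm K w Q) :
    (0 : Fin n → ℂ) ∈ convexHull ℝ
      (Phi P n '' {ζ ∈ K | wnorm K w P ≤ w ζ * ‖P.eval ζ‖}) := by
  classical
  set M := wnorm K w P with hM
  set f : ℂ → ℝ := fun ζ => w ζ * ‖P.eval ζ‖ with hf
  set E : Set ℂ := {ζ ∈ K | M ≤ f ζ} with hE
  have hfusc : UpperSemicontinuousOn f K :=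
    usc_mul husc hw0 (continuous_norm.comp P.continuous) (fun z => norm_nonneg _)
  have hEcpt : IsCompact E := usc_superlevel_compact hK hfusc M
  have hΦc : Continuous (Phi P n) := by
    apply continuous_pi
    intro k
    exact P.continuous.mul (Complex.continuous_conj.comp (continuous_pow (k : ℕ)))
  by_contra hnot
  have hScpt : IsCompact (Phi P n '' E) := hEcpt.image hΦc
  have hhullcpt : IsCompact (convexHull ℝ (Phi P n '' E)) := cpt_convexHull hScpt
  obtain ⟨g, u, hg0, hgt⟩ := geometric_hahn_banach_point_closed
    (convex_convexHull ℝ _) hhullcpt.isClosed hnot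
  rw [map_zero] at hg0
  have hgE : ∀ ζ ∈ E, u < g (Phi P n ζ) := fun ζ hζ =>
    hgt _ (subset_convexHull ℝ _ ⟨ζ, hζ, rfl⟩)
  -- translate the functional into a polynomial
  set c : Fin n → ℂ := fun k =>
    ((g (Pi.single k 1) : ℝ) : ℂ) + Complex.I * ((g (Pi.single k Complex.I) : ℝ) : ℂ) with hc
  have hgv : ∀ v : Fin n → ℂ, g v = ∑ k, ((starRingEnd ℂ) (c k) * v k).re := by
    intro v
    conv_lhs => rw [← Finset.univ_sum_single v, map_sum]
    apply Finset.sum_congr rfl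
    intro k _
    have hdecomp : (Pi.single k (v k) : Fin n → ℂ)
        = (v k).re • (Pi.single k (1:ℂ) : Fin n → ℂ)
          + (v k).im • (Pi.single k Complex.I : Fin n → ℂ) := by
      rw [← Pi.single_smul, ← Pi.single_smul, ← Pi.single_add]
      congr 1
      simp [Complex.real_smul]
    rw [hdecomp, map_add, map_smul, map_smul, smul_eq_mul, smul_eq_mul]
    have hcre : (c k).re = g (Pi.single k 1) := by simp [hc]
    have hcim : (c k).im = g (Pi.single k Complex.I) := by simp [hc]
    rw [Complex.mul_re, Complex.conj_re, Complex.conj_im, hcre, hcim]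
    ring
  set q : Polynomial ℂ := ∑ k : Fin n, Polynomial.C (c k) * Polynomial.X ^ (k : ℕ) with hq
  have hqdeg : q.degree < (n : WithBot ℕ) := by
    apply lt_of_le_of_lt (Polynomial.degree_sum_le _ _)
    rw [Finset.sup_lt_iff (by exact_mod_cast WithBot.bot_lt_coe n)]
    intro k _
    calc (Polynomial.C (c k) * Polynomial.X ^ (k:ℕ)).degree
        ≤ (Polynomial.C (c k)).degree + (Polynomial.X ^ (k:ℕ) : Polynomial ℂ).degree :=
          Polynomial.degree_mul_le _ _
      _ ≤ 0 + (Polynomial.X ^ (k:ℕ) : Polynomial ℂ).degree :=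
          add_le_add_left Polynomial.degree_C_le _
      _ = ((k:ℕ) : WithBot ℕ) := by rw [zero_add, Polynomial.degree_X_pow]
      _ < (n : WithBot ℕ) := by exact_mod_cast k.isLt
  have hqeval : ∀ ζ : ℂ, q.eval ζ = ∑ k : Fin n, c k * ζ ^ (k:ℕ) := by
    intro ζ
    rw [hq, Polynomial.eval_finset_sum]
    simp
  have hkey : ∀ ζ ∈ K, M ≤ f ζ → u < (P.eval ζ * (starRingEnd ℂ) (q.eval ζ)).re := by
    intro ζ hζK hζf
    have h1 := hgE ζ ⟨hζK, hζf⟩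
    rw [hgv] at h1
    have h2 : (P.eval ζ * (starRingEnd ℂ) (q.eval ζ)).re
        = ∑ k, ((starRingEnd ℂ) (c k) * Phi P n ζ k).re := by
      rw [hqeval, map_sum, Finset.mul_sum, Complex.re_sum]
      apply Finset.sum_congr rfl
      intro k _
      simp only [Phi, map_mul]
      congr 1
      ring
    rw [h2]
    exact h1
  exact perturb hK hKne hw0 hwb husc hsupp hmonic hdeg hmin hqdeg
    (lt_of_le_of_lt (map_zero g ▸ le_refl (0:ℝ)) hg0 : 0 < u) hkey

/-- Weighted Rivlin–Shapiro criterion. -/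
theorem stmt11 (K : Set ℂ) (hK : IsCompact K) (n : ℕ) (w : ℂ → ℝ)
    (hw0 : ∀ z ∈ K, 0 ≤ w z) (hwb : BddAbove (w '' K))
    (husc : UpperSemicontinuousOn w K)
    (hsupp : ∃ S : Finset ℂ, ↑S ⊆ K ∧ n + 1 ≤ S.card ∧ ∀ z ∈ S, w z ≠ 0)
    (P : Polynomial ℂ) (hmonic : P.Monic) (hdeg : P.natDegree = n) :
    (∀ Q : Polynomial ℂ, Q.Monic → Q.natDegree = n → wnorm K w P ≤ wnorm K w Q) ↔
      ∃ (m : ℕ), m ≤ 2 * n + 1 ∧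
        ∃ (z : Fin m → ℂ) (α : Fin m → ℝ),
          Function.Injective z ∧
          (∀ j, z j ∈ K ∧ w (z j) * ‖P.eval (z j)‖ = wnorm K w P) ∧
          (∀ j, 0 < α j) ∧ (∑ j, α j) = 1 ∧
          ∀ q : Polynomial ℂ, q.degree < n →
            (∑ j, (α j : ℂ) * P.eval (z j) * (starRingEnd ℂ) (q.eval (z j))) = 0 := by
  have hKne : K.Nonempty := by
    obtain ⟨S, hSK, hc, _⟩ := hsupp
    obtain ⟨x, hx⟩ := Finset.card_pos.mp (lt_of_lt_of_le (Nat.succ_pos n) hc)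
    exact ⟨x, hSK hx⟩
  constructor
  · intro hmin
    have hhull := hull_mem hK hKne hw0 hwb husc hsupp hmonic hdeg hmin
    obtain ⟨m, hm, z, α, hinj, hzE, hα, hα1, horth⟩ := extraction hhull
    refine ⟨m, hm, z, α, hinj, ?_, hα, hα1, horth⟩
    intro j
    obtain ⟨hjK, hjM⟩ := hzE j
    exact ⟨hjK, le_antisymm (le_wnorm hK hw0 hwb P hjK) hjM⟩
  · rintro ⟨m, hm, z, α, hinj, hzK, hα, hα1, horth⟩
    exact backward_dir hK hw0 hwb hsupp hmonic hdeg z α hzK hα hα1 horth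
end
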